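/- arXiv:1310.3352 — 2 statements merged into one kernel-verified Lean document; each statement's English description precedes it below -/
import Mathlib

section
/- Let Φ(t) = t·log(e+t)·log log log(e^{e^e}+t). Then for every p ∈ (1,∞), C_Φ((p+1)/2) is comparable to (p/(p-1))² · log log(e^e + 1/(p-1)), with implied constants independent of p. -/
open MeasureTheory ENNReal Set
noncomputable section

abbrev Rn (n : ℕ) := Fin n → ℝ

/-- Axis-parallel cube with center `c` and half-sidelength `r`. -/
def cube (n : ℕ) (c : Rn n) (r : ℝ) : Set (Rn n) := {y | ∀ i, |y i - c i| ≤ r}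

/-- Hardy–Littlewood maximal operator over cubes (ℝ≥0∞-valued input). -/
def Mop (n : ℕ) (f : Rn n → ℝ≥0∞) (x : Rn n) : ℝ≥0∞ :=
  ⨆ (c : Rn n) (r : ℝ) (_ : 0 < r) (_ : x ∈ cube n c r),
    (volume (cube n c r))⁻¹ * ∫⁻ y in cube n c r, f y

/-- Hardy–Littlewood maximal operator of a real function. -/
def MopR (n : ℕ) (f : Rn n → ℝ) (x : Rn n) : ℝ≥0∞ :=
  Mop n (fun y => ENNReal.ofReal |f y|) x

/-- Muckenhoupt `A_p` constant. -/
def ApConst (n : ℕ) (p : ℝ) (w : Rn n → ℝ) : ℝ≥0∞ :=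
  ⨆ (c : Rn n) (r : ℝ) (_ : 0 < r),
    ((volume (cube n c r))⁻¹ * ∫⁻ y in cube n c r, ENNReal.ofReal (w y)) *
      ((volume (cube n c r))⁻¹ *
        ∫⁻ y in cube n c r, (ENNReal.ofReal (w y)) ^ (-(1 / (p - 1)))) ^ (p - 1)

/-- Muckenhoupt `A_1` constant. -/
def A1Const (n : ℕ) (w : Rn n → ℝ) : ℝ≥0∞ :=
  ⨆ (c : Rn n) (r : ℝ) (_ : 0 < r),
    ((volume (cube n c r))⁻¹ * ∫⁻ y in cube n c r, ENNReal.ofReal (w y)) *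
      (essInf (fun y => ENNReal.ofReal (w y)) (volume.restrict (cube n c r)))⁻¹

/-- Fujii–Wilson `A_∞` constant. -/
def AinfConst (n : ℕ) (w : Rn n → ℝ) : ℝ≥0∞ :=
  ⨆ (c : Rn n) (r : ℝ) (_ : 0 < r),
    (∫⁻ y in cube n c r, ENNReal.ofReal (w y))⁻¹ *
      ∫⁻ x in cube n c r, Mop n ((cube n c r).indicator (fun y => ENNReal.ofReal (w y))) x

/-- Young function predicate. -/
def IsYoung (Φ : ℝ → ℝ) : Prop :=
  ContinuousOn Φ (Ici 0) ∧ ConvexOn ℝ (Ici 0) Φ ∧ MonotoneOn Φ (Ici 0) ∧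
    Φ 0 = 0 ∧ Filter.Tendsto Φ Filter.atTop Filter.atTop

/-- Mean Luxemburg norm of `f` on `Q`. -/
def luxNorm {n : ℕ} (Φ : ℝ → ℝ) (f : Rn n → ℝ) (Q : Set (Rn n)) : ℝ :=
  sInf {l : ℝ | 0 < l ∧
    (volume Q)⁻¹ * (∫⁻ x in Q, ENNReal.ofReal (Φ (|f x| / l))) ≤ 1}

/-- Weighted mean Luxemburg norm of `f` on `Q`. -/
def wLuxNorm {n : ℕ} (Φ : ℝ → ℝ) (w f : Rn n → ℝ) (Q : Set (Rn n)) : ℝ :=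
  sInf {l : ℝ | 0 < l ∧
    (∫⁻ x in Q, ENNReal.ofReal (w x))⁻¹ *
      (∫⁻ x in Q, ENNReal.ofReal (Φ (|f x| / l)) * ENNReal.ofReal (w x)) ≤ 1}

/-- Orlicz maximal function `M_Φ`. -/
def MOrlicz (n : ℕ) (Φ : ℝ → ℝ) (f : Rn n → ℝ) (x : Rn n) : ℝ≥0∞ :=
  ⨆ (c : Rn n) (r : ℝ) (_ : 0 < r) (_ : x ∈ cube n c r),
    ENNReal.ofReal (luxNorm Φ f (cube n c r))

/-- `B_p` constant of a Young function, ℝ≥0∞-valued. -/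
def BpConst (Φ : ℝ → ℝ) (p : ℝ) : ℝ≥0∞ :=
  (∫⁻ t in Ioi (1 : ℝ), ENNReal.ofReal (Φ t / t ^ (p + 1))) ^ (1 / p)

/-- `B_p` constant of a Young function, real-valued. -/
def BpConstR (Φ : ℝ → ℝ) (p : ℝ) : ℝ :=
  (∫ t in Ioi (1 : ℝ), Φ t / t ^ (p + 1)) ^ (1 / p)

/-- Weighted `L^p` "norm" of an ℝ≥0∞-valued function. -/
def wLp (n : ℕ) (p : ℝ) (f : Rn n → ℝ≥0∞) (w : Rn n → ℝ) : ℝ≥0∞ :=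
  (∫⁻ x, (f x) ^ p * ENNReal.ofReal (w x)) ^ (1 / p)

/-- Sparse family of sets. -/
def IsSparse (n : ℕ) (S : Set (Set (Rn n))) : Prop :=
  ∃ E : Set (Rn n) → Set (Rn n),
    (∀ Q ∈ S, E Q ⊆ Q ∧ MeasurableSet (E Q) ∧ volume Q ≤ 2 * volume (E Q)) ∧
    S.PairwiseDisjoint E

/-- Non-increasing rearrangement of `g` restricted to `Q`, evaluated at `t`. -/
def rearr {n : ℕ} (g : Rn n → ℝ) (Q : Set (Rn n)) (t : ℝ≥0∞) : ℝ :=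
  sInf {s : ℝ | 0 ≤ s ∧ volume {x ∈ Q | s < |g x|} ≤ t}

/-- Local mean oscillation `ω_λ(f;Q)`. -/
def osc {n : ℕ} (lam : ℝ) (f : Rn n → ℝ) (Q : Set (Rn n)) : ℝ :=
  ⨅ c : ℝ, rearr (fun x => f x - c) Q (ENNReal.ofReal lam * volume Q)

/-- The dyadic lattice generated by the cube with center `c`, half-side `r`. -/
def dyadicSub (n : ℕ) (c : Rn n) (r : ℝ) : Set (Set (Rn n)) :=
  {Q | ∃ (k : ℕ) (j : Fin n → ℕ), (∀ i, j i < 2 ^ k) ∧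
    Q = cube n (fun i => c i - r + (2 * (j i : ℝ) + 1) * (r / 2 ^ k)) (r / 2 ^ k)}

/-- `m` is a median value of `f` on `Q`. -/
def IsMedian {n : ℕ} (f : Rn n → ℝ) (Q : Set (Rn n)) (m : ℝ) : Prop :=
  volume {x ∈ Q | m < f x} ≤ volume Q / 2 ∧ volume {x ∈ Q | f x < m} ≤ volume Q / 2


section AuxStmt1
open Real

lemma e_gt2 : (2:ℝ) < Real.exp 1 := lt_trans (by norm_num) Real.exp_one_gt_d9
lemma e_lt3 : Real.exp 1 < 3 := lt_trans Real.exp_one_lt_d9 (by norm_num)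

lemma ee_ge2 : (2:ℝ) ≤ Real.exp (Real.exp 1) := by
  have := Real.add_one_le_exp (Real.exp 1)
  nlinarith [e_gt2]

lemma ee_le21 : Real.exp (Real.exp 1) ≤ 21 := by
  have h1 : Real.exp (Real.exp 1) ≤ Real.exp 3 := Real.exp_le_exp.mpr e_lt3.le
  have h3 : Real.exp 3 = Real.exp 1 * Real.exp 1 * Real.exp 1 := by
    rw [← Real.exp_add, ← Real.exp_add]; norm_num
  nlinarith [Real.exp_one_lt_d9, e_gt2]

-- log(ee + x) ≥ e for x ≥ 0; loglog(ee+x) ≥ 1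
lemma log_ee_ge {x : ℝ} (hx : 0 ≤ x) : Real.exp 1 ≤ Real.log (Real.exp (Real.exp 1) + x) := by
  calc Real.exp 1 = Real.log (Real.exp (Real.exp 1)) := (Real.log_exp _).symm
  _ ≤ _ := Real.log_le_log (Real.exp_pos _) (by linarith)

lemma loglog_ee_ge {x : ℝ} (hx : 0 ≤ x) :
    1 ≤ Real.log (Real.log (Real.exp (Real.exp 1) + x)) := by
  calc (1:ℝ) = Real.log (Real.exp 1) := (Real.log_exp _).symm
  _ ≤ _ := Real.log_le_log (Real.exp_pos _) (log_ee_ge hx)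

-- chain for EE = exp(exp(exp 1))
lemma logEE_ge {t : ℝ} (ht : 0 ≤ t) :
    Real.exp (Real.exp 1) ≤ Real.log (Real.exp (Real.exp (Real.exp 1)) + t) := by
  calc Real.exp (Real.exp 1) = Real.log (Real.exp (Real.exp (Real.exp 1))) := (Real.log_exp _).symm
  _ ≤ _ := Real.log_le_log (Real.exp_pos _) (by linarith)

lemma loglogEE_ge {t : ℝ} (ht : 0 ≤ t) :
    Real.exp 1 ≤ Real.log (Real.log (Real.exp (Real.exp (Real.exp 1)) + t)) := by
  calc Real.exp 1 = Real.log (Real.exp (Real.exp 1)) := (Real.log_exp _).symm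
  _ ≤ _ := Real.log_le_log (Real.exp_pos _) (logEE_ge ht)

lemma B_ge_one {t : ℝ} (ht : 0 ≤ t) :
    1 ≤ Real.log (Real.log (Real.log (Real.exp (Real.exp (Real.exp 1)) + t))) := by
  calc (1:ℝ) = Real.log (Real.exp 1) := (Real.log_exp _).symm
  _ ≤ _ := Real.log_le_log (Real.exp_pos _) (loglogEE_ge ht)

lemma A_ge_one {t : ℝ} (ht : 0 ≤ t) : 1 ≤ Real.log (Real.exp 1 + t) := by
  calc (1:ℝ) = Real.log (Real.exp 1) := (Real.log_exp _).symm
  _ ≤ _ := Real.log_le_log (Real.exp_pos _) (by linarith)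

lemma A_ub {t : ℝ} (ht : 1 ≤ t) : Real.log (Real.exp 1 + t) ≤ Real.log t + 2 := by
  have ht0 : (0:ℝ) < t := lt_of_lt_of_le zero_lt_one ht
  have h1 : Real.exp 1 + t ≤ (2 * Real.exp 1) * t := by nlinarith [e_gt2]
  calc Real.log (Real.exp 1 + t) ≤ Real.log ((2 * Real.exp 1) * t) :=
        Real.log_le_log (by positivity) h1
  _ = Real.log (2 * Real.exp 1) + Real.log t := Real.log_mul (by positivity) ht0.ne'
  _ ≤ 2 + Real.log t := by
      have : Real.log (2 * Real.exp 1) ≤ 2 := by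
        rw [Real.log_le_iff_le_exp (by positivity)]
        rw [show (2:ℝ) = 1 + 1 by norm_num, Real.exp_add]
        nlinarith [e_gt2, Real.exp_one_lt_d9]
      linarith
  _ = Real.log t + 2 := by ring

lemma loglog_ee_le_two_L {ε : ℝ} (hε : 0 < ε) :
    Real.log (Real.log (Real.exp (Real.exp 1) + 1/ε)) ≤
      2 * Real.log (Real.log (Real.exp (Real.exp 1) + 1/(2*ε))) := by
  set ee := Real.exp (Real.exp 1) with hee_def
  have hee : (2:ℝ) ≤ ee := ee_ge2
  have hu : (0:ℝ) < 1/ε := by positivity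
  set M : ℝ := ee + 1/(2*ε) with hM_def
  have hM2 : ee + 1/ε ≤ M^2 := by
    have h12 : 1/(2*ε) = (1/ε)/2 := by ring
    rw [hM_def, h12]
    nlinarith [hu, hee]
  have hMpos : (0:ℝ) < M := by positivity
  have hlogM : Real.exp 1 ≤ Real.log M := log_ee_ge (by positivity)
  have hlogMpos : (0:ℝ) < Real.log M := lt_of_lt_of_le (Real.exp_pos 1) hlogM
  have h1 : Real.log (ee + 1/ε) ≤ 2 * Real.log M := by
    calc Real.log (ee + 1/ε) ≤ Real.log (M^2) := Real.log_le_log (by positivity) hM2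
    _ = 2 * Real.log M := by rw [Real.log_pow]; norm_num
  have hL1 : 1 ≤ Real.log (Real.log M) := loglog_ee_ge (by positivity)
  calc Real.log (Real.log (ee + 1/ε)) ≤ Real.log (2 * Real.log M) :=
        Real.log_le_log (lt_of_lt_of_le (Real.exp_pos 1) (log_ee_ge hu.le)) h1
  _ = Real.log 2 + Real.log (Real.log M) := Real.log_mul (by norm_num) hlogMpos.ne'
  _ ≤ 2 * Real.log (Real.log M) := by
      have h2 : Real.log 2 ≤ 1 := by
        rw [Real.log_le_iff_le_exp (by norm_num)]
        exact e_gt2.le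
      linarith

lemma B_ub {ε t : ℝ} (hε : 0 < ε) (ht : 1 ≤ t) :
    Real.log (Real.log (Real.log (Real.exp (Real.exp (Real.exp 1)) + t))) ≤
      Real.exp (Real.exp 1) + ε * Real.log t
        + 2 * Real.log (Real.log (Real.exp (Real.exp 1) + 1/(2*ε))) := by
  set ee := Real.exp (Real.exp 1) with hee_def
  set EE := Real.exp (Real.exp (Real.exp 1)) with hEE_def
  have hee : (2:ℝ) ≤ ee := ee_ge2
  have hEE1 : (1:ℝ) ≤ EE := by
    have := Real.add_one_le_exp ee; rw [hEE_def]; linarith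
  have ht0 : (0:ℝ) < t := lt_of_lt_of_le zero_lt_one ht
  set s := Real.log t with hs_def
  have hs : 0 ≤ s := Real.log_nonneg ht
  -- step 1 : log (EE + t) ≤ ee + 1 + s
  have h1 : Real.log (EE + t) ≤ ee + 1 + s := by
    have hle : EE + t ≤ 2 * EE * t := by nlinarith
    have hlog2 : Real.log 2 ≤ 1 := by
      rw [Real.log_le_iff_le_exp (by norm_num)]
      exact e_gt2.le
    calc Real.log (EE + t) ≤ Real.log (2 * EE * t) := Real.log_le_log (by positivity) hle
    _ = Real.log (2 * EE) + Real.log t := Real.log_mul (by positivity) ht0.ne'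
    _ = Real.log 2 + Real.log EE + s := by rw [Real.log_mul (by norm_num) (by positivity)]
    _ = Real.log 2 + ee + s := by rw [hEE_def, Real.log_exp]
    _ ≤ ee + 1 + s := by linarith
  -- step 2
  have h2 : ee + 1 + s ≤ (ee + ε*s) * (ee + 1/ε) := by
    have h2a : (0:ℝ) < 1/ε := by positivity
    have : (ee + ε*s) * (ee + 1/ε) = ee^2 + ee/ε + ε*s*ee + s := by field_simp; ring
    rw [this]
    have hd : (0:ℝ) ≤ ee/ε := by positivity
    have hm : (0:ℝ) ≤ ε*s*ee := by positivity
    nlinarith [hee, hd, hm, sq_nonneg (ee - 2)]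
  set a := Real.log (ee + ε*s) with ha_def
  set b := Real.log (ee + 1/ε) with hb_def
  have ha2 : (2:ℝ) ≤ a := le_trans e_gt2.le (log_ee_ge (by positivity))
  have hb2 : (2:ℝ) ≤ b := le_trans e_gt2.le (log_ee_ge (by positivity))
  -- step 3
  have h3 : Real.log (Real.log (EE + t)) ≤ a + b := by
    calc Real.log (Real.log (EE + t)) ≤ Real.log ((ee + ε*s) * (ee + 1/ε)) := by
          refine Real.log_le_log ?_ (le_trans h1 h2)
          exact lt_of_lt_of_le (Real.exp_pos _) (logEE_ge ht0.le)
    _ = a + b := Real.log_mul (by positivity) (by positivity)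
  -- step 4 : B ≤ log a + log b
  have h4 : Real.log (Real.log (Real.log (EE + t))) ≤ Real.log a + Real.log b := by
    calc Real.log (Real.log (Real.log (EE + t))) ≤ Real.log (a + b) := by
          refine Real.log_le_log ?_ h3
          exact lt_of_lt_of_le (Real.exp_pos _) (loglogEE_ge ht0.le)
    _ ≤ Real.log (a * b) := Real.log_le_log (by linarith) (by nlinarith)
    _ = Real.log a + Real.log b := Real.log_mul (by linarith) (by linarith)
  have h5 : Real.log a ≤ ee + ε * s := by
    have := Real.log_le_sub_one_of_pos (show (0:ℝ) < a by linarith)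
    have h5b := Real.log_le_sub_one_of_pos (show (0:ℝ) < ee + ε*s by positivity)
    rw [ha_def] at this ⊢
    linarith
  have h6 : Real.log b ≤ 2 * Real.log (Real.log (ee + 1/(2*ε))) := loglog_ee_le_two_L hε
  calc Real.log (Real.log (Real.log (EE + t))) ≤ Real.log a + Real.log b := h4
  _ ≤ _ := by linarith

lemma B_lb {ε t : ℝ} (hε : 0 < ε) (hT : Real.exp (1/ε) ≤ t) :
    (3/10) * Real.log (Real.log (Real.exp (Real.exp 1) + 1/(2*ε))) ≤
      Real.log (Real.log (Real.log (Real.exp (Real.exp (Real.exp 1)) + t))) := by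
  set ee := Real.exp (Real.exp 1) with hee_def
  set EE := Real.exp (Real.exp (Real.exp 1)) with hEE_def
  set M : ℝ := ee + 1/(2*ε) with hM_def
  have hee : (2:ℝ) ≤ ee := ee_ge2
  have ht0 : (0:ℝ) < t := lt_of_lt_of_le (Real.exp_pos _) hT
  have hEEpos : (0:ℝ) < EE := Real.exp_pos _
  -- log (EE + t) ≥ ee and ≥ 1/ε
  have h1a : ee ≤ Real.log (EE + t) := logEE_ge ht0.le
  have h1b : 1/ε ≤ Real.log (EE + t) := by
    calc 1/ε = Real.log (Real.exp (1/ε)) := (Real.log_exp _).symm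
    _ ≤ Real.log t := Real.log_le_log (Real.exp_pos _) hT
    _ ≤ Real.log (EE + t) := Real.log_le_log ht0 (by linarith)
  have h1 : M/2 ≤ Real.log (EE + t) := by
    have : 1/(2*ε) ≤ 1/ε := by
      rw [div_le_div_iff₀ (by positivity) hε]; linarith
    rw [hM_def]; linarith
  have hMpos : (0:ℝ) < M := by positivity
  have hlogM : Real.exp 1 ≤ Real.log M := log_ee_ge (by positivity)
  have hlog2 : Real.log 2 ≤ 7/10 := le_of_lt (lt_trans Real.log_two_lt_d9 (by norm_num))
  -- loglog (EE+t) ≥ log M / 2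
  have h2 : Real.log M / 2 ≤ Real.log (Real.log (EE + t)) := by
    calc Real.log M / 2 ≤ Real.log M - Real.log 2 := by nlinarith [e_gt2]
    _ = Real.log (M/2) := (Real.log_div hMpos.ne' (by norm_num)).symm
    _ ≤ Real.log (Real.log (EE + t)) := Real.log_le_log (by positivity) h1
  have hL1 : 1 ≤ Real.log (Real.log M) := loglog_ee_ge (by positivity)
  have hlogMpos : (0:ℝ) < Real.log M := by nlinarith [e_gt2]
  calc (3/10) * Real.log (Real.log M) ≤ Real.log (Real.log M) - Real.log 2 := by linarith
  _ = Real.log (Real.log M / 2) := (Real.log_div hlogMpos.ne' (by norm_num)).symm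
  _ ≤ Real.log (Real.log (Real.log (EE + t))) := Real.log_le_log (by linarith) h2

lemma integrand_eq {ε t : ℝ} (ht : 1 < t) :
    t * Real.log (Real.exp 1 + t) *
        Real.log (Real.log (Real.log (Real.exp (Real.exp (Real.exp 1)) + t))) / t ^ ((2:ℝ)+ε)
      = t ^ (-1-ε) * (Real.log (Real.exp 1 + t) *
          Real.log (Real.log (Real.log (Real.exp (Real.exp (Real.exp 1)) + t)))) := by
  have ht0 : (0:ℝ) < t := lt_trans zero_lt_one ht
  have h1 : t ^ ((2:ℝ)+ε) = t * t ^ ((1:ℝ)+ε) := by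
    rw [show (2:ℝ)+ε = 1+(1+ε) by ring, Real.rpow_add ht0, Real.rpow_one]
  have h2 : t ^ (-1-ε : ℝ) = (t ^ ((1:ℝ)+ε))⁻¹ := by
    rw [show (-1-ε : ℝ) = -(1+ε) by ring, Real.rpow_neg ht0.le]
  have h3 : (0:ℝ) < t ^ ((1:ℝ)+ε) := Real.rpow_pos_of_pos ht0 _
  rw [h1, h2]
  field_simp

lemma contOn {ε : ℝ} (hε : 0 < ε) :
    ContinuousOn (fun t : ℝ => t * Real.log (Real.exp 1 + t) *
      Real.log (Real.log (Real.log (Real.exp (Real.exp (Real.exp 1)) + t))) / t ^ ((2:ℝ)+ε))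
      (Ioi 1) := by
  have hc : ∀ t : ℝ, t ∈ Ioi (1:ℝ) → (0:ℝ) < t := fun t ht => lt_trans zero_lt_one ht
  have cA : ContinuousOn (fun t : ℝ => Real.log (Real.exp 1 + t)) (Ioi 1) := by
    apply ContinuousOn.log ((continuous_const.add continuous_id).continuousOn)
    intro t ht; have := hc t ht; show Real.exp 1 + t ≠ 0; positivity
  have c1 : ContinuousOn (fun t : ℝ => Real.log (Real.exp (Real.exp (Real.exp 1)) + t))
      (Ioi 1) := by
    apply ContinuousOn.log ((continuous_const.add continuous_id).continuousOn)
    intro t ht; have := hc t ht; show Real.exp (Real.exp (Real.exp 1)) + t ≠ 0; positivity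
  have c2 : ContinuousOn
      (fun t : ℝ => Real.log (Real.log (Real.exp (Real.exp (Real.exp 1)) + t))) (Ioi 1) := by
    apply c1.log
    intro t ht
    have h1 := logEE_ge (le_of_lt (hc t ht))
    have h2 := ee_ge2
    exact ne_of_gt (by linarith)
  have c3 : ContinuousOn
      (fun t : ℝ => Real.log (Real.log (Real.log (Real.exp (Real.exp (Real.exp 1)) + t))))
      (Ioi 1) := by
    apply c2.log
    intro t ht
    have h1 := loglogEE_ge (le_of_lt (hc t ht))
    have h2 := e_gt2
    exact ne_of_gt (by linarith)
  apply ContinuousOn.div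
  · exact (continuousOn_id.mul cA).mul c3
  · exact (Real.continuous_rpow_const (by linarith : (0:ℝ) ≤ 2+ε)).continuousOn
  · intro t ht
    exact (Real.rpow_pos_of_pos (hc t ht) _).ne'


-- limit lemmas
lemma tlim1 {ε : ℝ} (hε : 0 < ε) :
    Filter.Tendsto (fun x : ℝ => Real.log x * x ^ (-ε)) Filter.atTop (nhds 0) := by
  have h := (isLittleO_log_rpow_atTop hε).tendsto_div_nhds_zero
  refine h.congr' ?_
  filter_upwards [Filter.eventually_gt_atTop (0:ℝ)] with x hx
  rw [Real.rpow_neg hx.le, div_eq_mul_inv]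

lemma tlim2 {ε : ℝ} (hε : 0 < ε) :
    Filter.Tendsto (fun x : ℝ => (Real.log x)^2 * x ^ (-ε)) Filter.atTop (nhds 0) := by
  have h := (isLittleO_log_rpow_rpow_atTop (2:ℝ) hε).tendsto_div_nhds_zero
  refine h.congr' ?_
  filter_upwards [Filter.eventually_gt_atTop (1:ℝ)] with x hx
  have hlog : (0:ℝ) ≤ Real.log x := Real.log_nonneg hx.le
  rw [div_eq_mul_inv, ← Real.rpow_neg (le_of_lt (lt_trans zero_lt_one hx)),
    show ((2:ℝ)) = ((2:ℕ):ℝ) by norm_num, Real.rpow_natCast]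

lemma tlim0 {ε : ℝ} (hε : 0 < ε) :
    Filter.Tendsto (fun x : ℝ => x ^ (-ε)) Filter.atTop (nhds 0) :=
  tendsto_rpow_neg_atTop hε

-- F0
lemma intF0 {ε : ℝ} (hε : 0 < ε) :
    IntegrableOn (fun t : ℝ => t ^ (-1-ε)) (Ioi 1) ∧
      ∫ t in Ioi (1:ℝ), t ^ (-1-ε) = 1/ε := by
  constructor
  · exact integrableOn_Ioi_rpow_of_lt (by linarith) zero_lt_one
  · rw [integral_Ioi_rpow_of_lt (by linarith) zero_lt_one]
    rw [Real.one_rpow]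
    ring_nf

lemma derivF1 {ε : ℝ} (hε : 0 < ε) {x : ℝ} (hx : x ∈ Ici (1:ℝ)) :
    HasDerivAt (fun t : ℝ => -(ε * Real.log t + 1) * t ^ (-ε) / ε^2)
      (x ^ (-1-ε) * Real.log x) x := by
  have hx0 : (0:ℝ) < x := lt_of_lt_of_le zero_lt_one hx
  have h1 : HasDerivAt (fun t : ℝ => -(ε * Real.log t + 1)) (-(ε * x⁻¹)) x := by
    exact (((Real.hasDerivAt_log hx0.ne').const_mul ε).add_const 1).neg
  have h2 : HasDerivAt (fun t : ℝ => t ^ (-ε)) (-ε * x ^ (-ε - 1)) x :=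
    Real.hasDerivAt_rpow_const (Or.inl hx0.ne')
  have h := (h1.mul h2).div_const (ε^2)
  refine h.congr_deriv ?_
  have e1 : x ^ (-ε - 1) = x ^ (-ε) * x⁻¹ := by
    rw [Real.rpow_sub hx0, Real.rpow_one, div_eq_mul_inv]
  have e2 : x ^ (-1-ε) = x ^ (-ε) * x⁻¹ := by
    rw [show (-1-ε : ℝ) = -ε - 1 by ring, e1]
  rw [e1, e2]
  field_simp
  ring

lemma intF1 {ε : ℝ} (hε : 0 < ε) :
    IntegrableOn (fun t : ℝ => t ^ (-1-ε) * Real.log t) (Ioi 1) ∧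
      ∫ t in Ioi (1:ℝ), t ^ (-1-ε) * Real.log t = 1/ε^2 := by
  have hnn : ∀ x ∈ Ioi (1:ℝ), 0 ≤ x ^ (-1-ε) * Real.log x := by
    intro x hx
    exact mul_nonneg (Real.rpow_nonneg (by linarith [mem_Ioi.mp hx]) _)
      (Real.log_nonneg (le_of_lt (mem_Ioi.mp hx)))
  have htend : Filter.Tendsto (fun t : ℝ => -(ε * Real.log t + 1) * t ^ (-ε) / ε^2)
      Filter.atTop (nhds 0) := by
    have : Filter.Tendsto (fun t : ℝ => -(ε * (Real.log t * t ^ (-ε)) + t ^ (-ε)) / ε^2)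
        Filter.atTop (nhds (-(ε * 0 + 0) / ε^2)) := by
      exact (((((tlim1 hε).const_mul ε)).add (tlim0 hε)).neg).div_const _
    simp only [mul_zero, add_zero, neg_zero, zero_div] at this
    refine this.congr fun t => by ring
  constructor
  · exact integrableOn_Ioi_deriv_of_nonneg' (fun x hx => derivF1 hε hx) hnn htend
  · rw [integral_Ioi_of_hasDerivAt_of_nonneg' (fun x hx => derivF1 hε hx) hnn htend]
    simp [Real.one_rpow, Real.log_one]
    ring

lemma derivF2 {ε : ℝ} (hε : 0 < ε) {x : ℝ} (hx : x ∈ Ici (1:ℝ)) :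
    HasDerivAt (fun t : ℝ => -(ε^2 * (Real.log t)^2 + 2*ε*Real.log t + 2) * t ^ (-ε) / ε^3)
      (x ^ (-1-ε) * (Real.log x)^2) x := by
  have hx0 : (0:ℝ) < x := lt_of_lt_of_le zero_lt_one hx
  have hlog : HasDerivAt Real.log x⁻¹ x := Real.hasDerivAt_log hx0.ne'
  have h1 : HasDerivAt (fun t : ℝ => -(ε^2 * (Real.log t)^2 + 2*ε*Real.log t + 2))
      (-(ε^2 * (2 * Real.log x * x⁻¹) + 2*ε*x⁻¹)) x := by
    have hsq : HasDerivAt (fun t : ℝ => (Real.log t)^2) (2 * Real.log x * x⁻¹) x := by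
      simpa [pow_one, mul_comm, mul_assoc] using (hlog.fun_pow 2)
    exact (((hsq.const_mul (ε^2)).add ((hlog.const_mul (2*ε)))).add_const 2).neg
  have h2 : HasDerivAt (fun t : ℝ => t ^ (-ε)) (-ε * x ^ (-ε - 1)) x :=
    Real.hasDerivAt_rpow_const (Or.inl hx0.ne')
  have h := (h1.mul h2).div_const (ε^3)
  refine h.congr_deriv ?_
  have e1 : x ^ (-ε - 1) = x ^ (-ε) * x⁻¹ := by
    rw [Real.rpow_sub hx0, Real.rpow_one, div_eq_mul_inv]
  have e2 : x ^ (-1-ε) = x ^ (-ε) * x⁻¹ := by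
    rw [show (-1-ε : ℝ) = -ε - 1 by ring, e1]
  rw [e1, e2]
  field_simp
  ring

lemma intF2 {ε : ℝ} (hε : 0 < ε) :
    IntegrableOn (fun t : ℝ => t ^ (-1-ε) * (Real.log t)^2) (Ioi 1) ∧
      ∫ t in Ioi (1:ℝ), t ^ (-1-ε) * (Real.log t)^2 = 2/ε^3 := by
  have hnn : ∀ x ∈ Ioi (1:ℝ), 0 ≤ x ^ (-1-ε) * (Real.log x)^2 := by
    intro x hx
    exact mul_nonneg (Real.rpow_nonneg (by linarith [mem_Ioi.mp hx]) _) (sq_nonneg _)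
  have htend : Filter.Tendsto
      (fun t : ℝ => -(ε^2 * (Real.log t)^2 + 2*ε*Real.log t + 2) * t ^ (-ε) / ε^3)
      Filter.atTop (nhds 0) := by
    have : Filter.Tendsto
        (fun t : ℝ => -(ε^2 * ((Real.log t)^2 * t ^ (-ε)) + 2*ε*(Real.log t * t ^ (-ε))
          + 2 * t ^ (-ε)) / ε^3)
        Filter.atTop (nhds (-(ε^2 * 0 + 2*ε*0 + 2*0) / ε^3)) := by
      exact (((((tlim2 hε).const_mul (ε^2)).add ((tlim1 hε).const_mul (2*ε))).add
        ((tlim0 hε).const_mul 2)).neg).div_const _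
    simp only [mul_zero, add_zero, neg_zero, zero_div] at this
    refine this.congr fun t => by ring
  constructor
  · exact integrableOn_Ioi_deriv_of_nonneg' (fun x hx => derivF2 hε hx) hnn htend
  · rw [integral_Ioi_of_hasDerivAt_of_nonneg' (fun x hx => derivF2 hε hx) hnn htend]
    simp [Real.one_rpow, Real.log_one]
    ring


lemma J_upper {ε : ℝ} (hε : 0 < ε) :
    IntegrableOn (fun t : ℝ => t * Real.log (Real.exp 1 + t) *
      Real.log (Real.log (Real.log (Real.exp (Real.exp (Real.exp 1)) + t))) / t ^ ((2:ℝ)+ε))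
      (Ioi 1) ∧
    (∫ t in Ioi (1:ℝ), t * Real.log (Real.exp 1 + t) *
        Real.log (Real.log (Real.log (Real.exp (Real.exp (Real.exp 1)) + t))) / t ^ ((2:ℝ)+ε))
      ≤ (Real.exp (Real.exp 1) + 2 * Real.log (Real.log (Real.exp (Real.exp 1) + 1/(2*ε))))
          * (1/ε^2 + 2/ε) + 2/ε^2 + 2/ε := by
  set ee := Real.exp (Real.exp 1) with hee_def
  set L := Real.log (Real.log (ee + 1/(2*ε))) with hL_def
  have hL1 : (1:ℝ) ≤ L := loglog_ee_ge (by positivity)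
  have hee2 : (2:ℝ) ≤ ee := ee_ge2
  set f : ℝ → ℝ := fun t => t * Real.log (Real.exp 1 + t) *
      Real.log (Real.log (Real.log (Real.exp (Real.exp (Real.exp 1)) + t))) / t ^ ((2:ℝ)+ε)
    with hf_def
  set h : ℝ → ℝ := fun t => (ee + 2*L) * (t ^ (-1-ε) * Real.log t)
      + (2*(ee + 2*L)) * t ^ (-1-ε) + ε * (t ^ (-1-ε) * (Real.log t)^2)
      + (2*ε) * (t ^ (-1-ε) * Real.log t) with hh_def
  have hint1 := intF1 hε
  have hint0 := intF0 hε
  have hint2 := intF2 hε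
  have hInth : IntegrableOn h (Ioi 1) := by
    exact (((hint1.1.const_mul _).add (hint0.1.const_mul _)).add
      (hint2.1.const_mul _)).add (hint1.1.const_mul _)
  have hpoint : ∀ t ∈ Ioi (1:ℝ), f t ≤ h t := by
    intro t ht
    have ht1 : (1:ℝ) < t := ht
    have ht0 : (0:ℝ) < t := lt_trans zero_lt_one ht1
    have hrw := integrand_eq (ε := ε) ht1
    rw [hf_def]
    simp only []
    rw [hrw]
    have hA := A_ub ht1.le
    have hB := B_ub hε ht1.le
    have hA0 : (0:ℝ) ≤ Real.log (Real.exp 1 + t) := le_trans zero_le_one (A_ge_one ht0.le)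
    have hB0 : (0:ℝ) ≤
        Real.log (Real.log (Real.log (Real.exp (Real.exp (Real.exp 1)) + t))) :=
      le_trans zero_le_one (B_ge_one ht0.le)
    have hlog0 : (0:ℝ) ≤ Real.log t := Real.log_nonneg ht1.le
    have hmul : Real.log (Real.exp 1 + t) *
        Real.log (Real.log (Real.log (Real.exp (Real.exp (Real.exp 1)) + t)))
        ≤ (Real.log t + 2) * (ee + ε * Real.log t + 2 * L) := by
      apply mul_le_mul hA hB hB0 (by linarith)
    have hr0 : (0:ℝ) ≤ t ^ (-1-ε : ℝ) := Real.rpow_nonneg ht0.le _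
    calc t ^ (-1-ε : ℝ) * (Real.log (Real.exp 1 + t) *
          Real.log (Real.log (Real.log (Real.exp (Real.exp (Real.exp 1)) + t))))
        ≤ t ^ (-1-ε : ℝ) * ((Real.log t + 2) * (ee + ε * Real.log t + 2 * L)) :=
          mul_le_mul_of_nonneg_left hmul hr0
      _ = h t := by rw [hh_def]; ring
  have hfnn : ∀ t ∈ Ioi (1:ℝ), 0 ≤ f t := by
    intro t ht
    have ht1 : (1:ℝ) < t := ht
    have ht0 : (0:ℝ) < t := lt_trans zero_lt_one ht1
    rw [hf_def]
    simp only []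
    rw [integrand_eq ht1]
    have hA0 : (0:ℝ) ≤ Real.log (Real.exp 1 + t) := le_trans zero_le_one (A_ge_one ht0.le)
    have hB0 : (0:ℝ) ≤
        Real.log (Real.log (Real.log (Real.exp (Real.exp (Real.exp 1)) + t))) :=
      le_trans zero_le_one (B_ge_one ht0.le)
    have hr0 : (0:ℝ) ≤ t ^ (-1-ε : ℝ) := Real.rpow_nonneg ht0.le _
    positivity
  have haemem := ae_restrict_mem (μ := volume) (measurableSet_Ioi (a := (1:ℝ)))
  have hIntf : IntegrableOn f (Ioi 1) := by
    apply Integrable.mono' hInth ((contOn hε).aestronglyMeasurable measurableSet_Ioi)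
    filter_upwards [haemem] with t ht
    rw [Real.norm_eq_abs, abs_of_nonneg (hfnn t ht)]
    exact hpoint t ht
  refine ⟨hIntf, ?_⟩
  have hle : (∫ t in Ioi (1:ℝ), f t) ≤ ∫ t in Ioi (1:ℝ), h t := by
    apply integral_mono_of_nonneg
    · filter_upwards [haemem] with t ht; exact hfnn t ht
    · exact hInth
    · filter_upwards [haemem] with t ht; exact hpoint t ht
  have i1 : Integrable (fun t : ℝ => (ee + 2*L) * (t ^ (-1-ε) * Real.log t))
      (volume.restrict (Ioi 1)) := hint1.1.const_mul _
  have i2 : Integrable (fun t : ℝ => (2*(ee + 2*L)) * t ^ (-1-ε))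
      (volume.restrict (Ioi 1)) := hint0.1.const_mul _
  have i3 : Integrable (fun t : ℝ => ε * (t ^ (-1-ε) * (Real.log t)^2))
      (volume.restrict (Ioi 1)) := hint2.1.const_mul _
  have i4 : Integrable (fun t : ℝ => (2*ε) * (t ^ (-1-ε) * Real.log t))
      (volume.restrict (Ioi 1)) := hint1.1.const_mul _
  have i34 : Integrable (fun t : ℝ => ε * (t ^ (-1-ε) * (Real.log t)^2)
      + (2*ε) * (t ^ (-1-ε) * Real.log t)) (volume.restrict (Ioi 1)) := i3.add i4
  have i234 : Integrable (fun t : ℝ => (2*(ee + 2*L)) * t ^ (-1-ε)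
      + (ε * (t ^ (-1-ε) * (Real.log t)^2) + (2*ε) * (t ^ (-1-ε) * Real.log t)))
      (volume.restrict (Ioi 1)) := i2.add i34
  have hval : (∫ t in Ioi (1:ℝ), h t) = (ee + 2*L) * (1/ε^2) + (2*(ee + 2*L)) * (1/ε)
      + ε * (2/ε^3) + (2*ε) * (1/ε^2) := by
    have hrw : (∫ t in Ioi (1:ℝ), h t) = ∫ t in Ioi (1:ℝ),
        ((ee + 2*L) * (t ^ (-1-ε) * Real.log t) + ((2*(ee + 2*L)) * t ^ (-1-ε)
        + (ε * (t ^ (-1-ε) * (Real.log t)^2) + (2*ε) * (t ^ (-1-ε) * Real.log t)))) := by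
      apply setIntegral_congr_fun measurableSet_Ioi
      intro t _; rw [hh_def]; ring
    rw [hrw, integral_add i1 i234, integral_add i2 i34, integral_add i3 i4]
    rw [integral_const_mul, integral_const_mul, integral_const_mul, integral_const_mul]
    rw [hint1.2, hint0.2, hint2.2]
    ring
  refine le_trans hle ?_
  rw [hval]
  have : ε * (2/ε^3) = 2/ε^2 := by field_simp
  have h2 : (2*ε) * (1/ε^2) = 2/ε := by field_simp
  rw [this, h2]
  ring_nf
  apply le_of_eq
  ring

lemma exp_diff_lb : (1:ℝ)/5 ≤ Real.exp (-1) - Real.exp (-2) := by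
  have h1 : Real.exp (-1) = (Real.exp 1)⁻¹ := by rw [Real.exp_neg]
  have h2 : Real.exp (-2) = (Real.exp 1 * Real.exp 1)⁻¹ := by
    rw [Real.exp_neg, ← Real.exp_add]; norm_num
  have hgt := Real.exp_one_gt_d9
  have hlt := Real.exp_one_lt_d9
  have hpos : (0:ℝ) < Real.exp 1 := Real.exp_pos 1
  have h3 : (Real.exp 1)⁻¹ - (Real.exp 1 * Real.exp 1)⁻¹
      = (Real.exp 1 - 1)/(Real.exp 1 * Real.exp 1) := by field_simp
  rw [h1, h2, h3, le_div_iff₀ (by positivity)]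
  nlinarith

lemma J_lower {ε : ℝ} (hε : 0 < ε) :
    (3/50) * Real.log (Real.log (Real.exp (Real.exp 1) + 1/(2*ε))) / ε^2 ≤
    ∫ t in Ioi (1:ℝ), t * Real.log (Real.exp 1 + t) *
        Real.log (Real.log (Real.log (Real.exp (Real.exp (Real.exp 1)) + t))) / t ^ ((2:ℝ)+ε) := by
  set L := Real.log (Real.log (Real.exp (Real.exp 1) + 1/(2*ε))) with hL_def
  have hL1 : (1:ℝ) ≤ L := loglog_ee_ge (by positivity)
  set f : ℝ → ℝ := fun t => t * Real.log (Real.exp 1 + t) *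
      Real.log (Real.log (Real.log (Real.exp (Real.exp (Real.exp 1)) + t))) / t ^ ((2:ℝ)+ε)
    with hf_def
  set T : ℝ := Real.exp (1/ε) with hT_def
  set T2 : ℝ := Real.exp (2/ε) with hT2_def
  have hT1 : (1:ℝ) < T := by
    rw [hT_def, show (1:ℝ) = Real.exp 0 by rw [Real.exp_zero]]
    exact Real.exp_lt_exp.mpr (by positivity)
  have hTT2 : T ≤ T2 := Real.exp_le_exp.mpr (by
    rw [div_le_div_iff₀ hε hε]; nlinarith)
  have hT0 : (0:ℝ) < T := lt_trans zero_lt_one hT1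
  have hsub : Ioc T T2 ⊆ Ioi (1:ℝ) := fun x hx => lt_of_lt_of_le hT1 hx.1.le
  have hIntf : IntegrableOn f (Ioi 1) := (J_upper hε).1
  have hfnn : ∀ t ∈ Ioi (1:ℝ), 0 ≤ f t := by
    intro t ht
    have ht1 : (1:ℝ) < t := ht
    have ht0 : (0:ℝ) < t := lt_trans zero_lt_one ht1
    rw [hf_def]; simp only []
    have hA0 : (0:ℝ) ≤ Real.log (Real.exp 1 + t) := le_trans zero_le_one (A_ge_one ht0.le)
    have hB0 : (0:ℝ) ≤
        Real.log (Real.log (Real.log (Real.exp (Real.exp (Real.exp 1)) + t))) :=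
      le_trans zero_le_one (B_ge_one ht0.le)
    have hr0 : (0:ℝ) < t ^ ((2:ℝ)+ε) := Real.rpow_pos_of_pos ht0 _
    positivity
  -- step 1 : restrict to the window
  have step1 : (∫ t in Ioc T T2, f t) ≤ ∫ t in Ioi (1:ℝ), f t := by
    apply setIntegral_mono_set hIntf
    · filter_upwards [ae_restrict_mem (μ := volume) (measurableSet_Ioi (a := (1:ℝ)))] with t ht
      exact hfnn t ht
    · exact HasSubset.Subset.eventuallyLE hsub
  -- step 2 : pointwise bound on the window
  set c : ℝ := (1/ε) * ((3/10) * L) with hc_def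
  have hc0 : 0 ≤ c := by positivity
  have step2 : (∫ t in Ioc T T2, c * t ^ (-1-ε : ℝ)) ≤ ∫ t in Ioc T T2, f t := by
    apply setIntegral_mono_on
    · exact ((intF0 hε).1.mono_set hsub).const_mul c
    · exact hIntf.mono_set hsub
    · exact measurableSet_Ioc
    · intro t ht
      have ht1 : (1:ℝ) < t := lt_of_lt_of_le hT1 ht.1.le
      have ht0 : (0:ℝ) < t := lt_trans zero_lt_one ht1
      rw [hf_def]; simp only []
      rw [integrand_eq ht1]
      have hA : 1/ε ≤ Real.log (Real.exp 1 + t) := by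
        calc 1/ε = Real.log T := by rw [hT_def, Real.log_exp]
        _ ≤ Real.log t := Real.log_le_log hT0 ht.1.le
        _ ≤ Real.log (Real.exp 1 + t) := Real.log_le_log ht0 (by
            have := Real.exp_pos 1; linarith)
      have hB : (3/10) * L ≤
          Real.log (Real.log (Real.log (Real.exp (Real.exp (Real.exp 1)) + t))) :=
        B_lb hε ht.1.le
      have hr0 : (0:ℝ) ≤ t ^ (-1-ε : ℝ) := Real.rpow_nonneg ht0.le _
      have h30 : (0:ℝ) ≤ (3/10) * L := by positivity
      have h1e : (0:ℝ) ≤ 1/ε := by positivity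
      calc c * t ^ (-1-ε : ℝ) = t ^ (-1-ε : ℝ) * ((1/ε) * ((3/10)*L)) := by ring
      _ ≤ t ^ (-1-ε : ℝ) * (Real.log (Real.exp 1 + t) *
            Real.log (Real.log (Real.log (Real.exp (Real.exp (Real.exp 1)) + t)))) := by
          apply mul_le_mul_of_nonneg_left _ hr0
          apply mul_le_mul hA hB h30 (le_trans h1e hA)
  -- step 3 : compute the window integral
  have step3 : (∫ t in Ioc T T2, c * t ^ (-1-ε : ℝ)) =
      c * ((Real.exp (-1) - Real.exp (-2)) / ε) := by
    rw [integral_const_mul]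
    congr 1
    have h1 : (∫ t in Ioc T T2, t ^ (-1-ε : ℝ)) = ∫ t in T..T2, t ^ (-1-ε : ℝ) :=
      (intervalIntegral.integral_of_le hTT2).symm
    rw [h1, integral_rpow]
    · have e1 : T2 ^ (-1-ε+1 : ℝ) = Real.exp (-2) := by
        rw [hT2_def, ← Real.exp_mul]
        congr 1
        field_simp
        ring
      have e2 : T ^ (-1-ε+1 : ℝ) = Real.exp (-1) := by
        rw [hT_def, ← Real.exp_mul]
        congr 1
        field_simp
        ring
      rw [e1, e2, show (-1-ε+1 : ℝ) = -ε by ring, div_neg]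
      ring
    · right
      constructor
      · intro h
        have h0 : ε = 0 := by linarith
        rw [h0] at hε
        exact lt_irrefl 0 hε
      · intro h
        rw [Set.mem_uIcc] at h
        rcases h with ⟨h1, _⟩ | ⟨h1, _⟩
        · linarith
        · linarith [lt_of_lt_of_le hT0 hTT2]
  -- combine
  have final : (3/50) * L / ε^2 ≤ c * ((Real.exp (-1) - Real.exp (-2)) / ε) := by
    rw [hc_def]
    have hd := exp_diff_lb
    rw [div_le_iff₀ (by positivity : (0:ℝ) < ε^2)] -- (3/50)*L ≤ ... * ε^2
    have expand : (1/ε) * ((3/10) * L) * ((Real.exp (-1) - Real.exp (-2)) / ε) * ε^2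
        = (3/10) * L * (Real.exp (-1) - Real.exp (-2)) := by
      field_simp
    rw [expand]
    nlinarith [hL1, hd]
  calc (3/50) * L / ε^2 ≤ c * ((Real.exp (-1) - Real.exp (-2)) / ε) := final
  _ = ∫ t in Ioc T T2, c * t ^ (-1-ε : ℝ) := step3.symm
  _ ≤ ∫ t in Ioc T T2, f t := step2
  _ ≤ _ := step1

lemma J_lower2 {ε : ℝ} (hε : 0 < ε) :
    (2:ℝ) ^ (-(1+ε)) ≤ ∫ t in Ioi (1:ℝ), t * Real.log (Real.exp 1 + t) *
        Real.log (Real.log (Real.log (Real.exp (Real.exp (Real.exp 1)) + t))) / t ^ ((2:ℝ)+ε) := by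
  set f : ℝ → ℝ := fun t => t * Real.log (Real.exp 1 + t) *
      Real.log (Real.log (Real.log (Real.exp (Real.exp (Real.exp 1)) + t))) / t ^ ((2:ℝ)+ε)
    with hf_def
  have hIntf : IntegrableOn f (Ioi 1) := (J_upper hε).1
  have hsub : Ioc (1:ℝ) 2 ⊆ Ioi (1:ℝ) := fun x hx => hx.1
  have hfnn : ∀ t ∈ Ioi (1:ℝ), 0 ≤ f t := by
    intro t ht
    have ht1 : (1:ℝ) < t := ht
    have ht0 : (0:ℝ) < t := lt_trans zero_lt_one ht1
    rw [hf_def]; simp only []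
    have hA0 : (0:ℝ) ≤ Real.log (Real.exp 1 + t) := le_trans zero_le_one (A_ge_one ht0.le)
    have hB0 : (0:ℝ) ≤
        Real.log (Real.log (Real.log (Real.exp (Real.exp (Real.exp 1)) + t))) :=
      le_trans zero_le_one (B_ge_one ht0.le)
    have hr0 : (0:ℝ) < t ^ ((2:ℝ)+ε) := Real.rpow_pos_of_pos ht0 _
    positivity
  have step1 : (∫ t in Ioc (1:ℝ) 2, f t) ≤ ∫ t in Ioi (1:ℝ), f t := by
    apply setIntegral_mono_set hIntf
    · filter_upwards [ae_restrict_mem (μ := volume) (measurableSet_Ioi (a := (1:ℝ)))] with t ht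
      exact hfnn t ht
    · exact HasSubset.Subset.eventuallyLE hsub
  have step2 : (∫ t in Ioc (1:ℝ) 2, ((2:ℝ) ^ (-1-ε : ℝ))) ≤ ∫ t in Ioc (1:ℝ) 2, f t := by
    apply setIntegral_mono_on
    · exact integrableOn_const measure_Ioc_lt_top.ne
    · exact hIntf.mono_set hsub
    · exact measurableSet_Ioc
    · intro t ht
      have ht1 : (1:ℝ) < t := ht.1
      have ht0 : (0:ℝ) < t := lt_trans zero_lt_one ht1
      rw [hf_def]; simp only []
      rw [integrand_eq ht1]
      have hA1 : 1 ≤ Real.log (Real.exp 1 + t) := A_ge_one ht0.le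
      have hB1 : 1 ≤
          Real.log (Real.log (Real.log (Real.exp (Real.exp (Real.exp 1)) + t))) :=
        B_ge_one ht0.le
      have hprod : (1:ℝ) ≤ Real.log (Real.exp 1 + t) *
          Real.log (Real.log (Real.log (Real.exp (Real.exp (Real.exp 1)) + t))) := by
        nlinarith
      have hrpow : (2:ℝ) ^ (-1-ε : ℝ) ≤ t ^ (-1-ε : ℝ) :=
        Real.rpow_le_rpow_of_nonpos ht0 ht.2 (by linarith)
      calc (2:ℝ) ^ (-1-ε : ℝ) ≤ t ^ (-1-ε : ℝ) := hrpow
      _ = t ^ (-1-ε : ℝ) * 1 := (mul_one _).symm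
      _ ≤ t ^ (-1-ε : ℝ) * (Real.log (Real.exp 1 + t) *
            Real.log (Real.log (Real.log (Real.exp (Real.exp (Real.exp 1)) + t)))) :=
          mul_le_mul_of_nonneg_left hprod (Real.rpow_nonneg ht0.le _)
  have step3 : (∫ t in Ioc (1:ℝ) 2, ((2:ℝ) ^ (-1-ε : ℝ))) = (2:ℝ) ^ (-1-ε : ℝ) := by
    rw [setIntegral_const]
    rw [Real.volume_real_Ioc]
    norm_num
  calc (2:ℝ) ^ (-(1+ε)) = (2:ℝ) ^ (-1-ε : ℝ) := by rw [show (-(1+ε) : ℝ) = -1-ε by ring]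
  _ = ∫ t in Ioc (1:ℝ) 2, ((2:ℝ) ^ (-1-ε : ℝ)) := step3.symm
  _ ≤ ∫ t in Ioc (1:ℝ) 2, f t := step2
  _ ≤ _ := step1


lemma log22_le : Real.log 22 ≤ 4 := by
  rw [Real.log_le_iff_le_exp (by norm_num)]
  have h4 : Real.exp 4 = Real.exp 1 * Real.exp 1 * Real.exp 1 * Real.exp 1 := by
    rw [← Real.exp_add, ← Real.exp_add, ← Real.exp_add]; norm_num
  have h2 : (7:ℝ) ≤ Real.exp 1 * Real.exp 1 := by nlinarith [Real.exp_one_gt_d9]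
  nlinarith [h2]

lemma exp3_ge : (50:ℝ)/3 ≤ Real.exp 3 := by
  have h3 : Real.exp 3 = Real.exp 1 * Real.exp 1 * Real.exp 1 := by
    rw [← Real.exp_add, ← Real.exp_add]; norm_num
  nlinarith [Real.exp_one_gt_d9]

lemma exp5_ge : (50:ℝ)/3 ≤ Real.exp 5 :=
  le_trans exp3_ge (Real.exp_le_exp.mpr (by norm_num))

lemma exp10_ge : (16:ℝ) ≤ Real.exp 10 :=
  le_trans (by linarith [exp3_ge]) (Real.exp_le_exp.mpr (by norm_num))

lemma L_le22 {ε : ℝ} (hε : 0 < ε) (hε2 : ε ≤ 1/2) :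
    Real.log (Real.log (Real.exp (Real.exp 1) + 1/(2*ε))) ≤ 22/ε := by
  set x : ℝ := Real.exp (Real.exp 1) + 1/(2*ε) with hx_def
  have hx : (0:ℝ) < x := by positivity
  have hlx : Real.exp 1 ≤ Real.log x := log_ee_ge (by positivity)
  have hlx0 : (0:ℝ) < Real.log x := lt_of_lt_of_le (Real.exp_pos 1) hlx
  have h1 : Real.log (Real.log x) ≤ Real.log x := by
    linarith [Real.log_le_sub_one_of_pos hlx0]
  have h2 : Real.log x ≤ x := by linarith [Real.log_le_sub_one_of_pos hx]
  have hinv : (2:ℝ) ≤ 1/ε := by rw [le_div_iff₀ hε]; linarith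
  have h3 : x ≤ 22/ε := by
    have hee := ee_le21
    have h4 : 1/(2*ε) ≤ 1/ε := by
      rw [div_le_div_iff₀ (by positivity) hε]; nlinarith
    have h5 : (21:ℝ) ≤ 21/ε := by
      rw [le_div_iff₀ hε]; nlinarith
    have h6 : 21/ε + 1/ε = 22/ε := by ring
    rw [hx_def]; linarith
  exact le_trans h1 (le_trans h2 h3)

lemma L_le_two {x : ℝ} (hx : 0 < x) (hx1 : x ≤ 1) :
    Real.log (Real.log (Real.exp (Real.exp 1) + x)) ≤ 2 := by
  have he := e_gt2
  have hee1 : (1:ℝ) ≤ Real.exp (Real.exp 1) := by linarith [ee_ge2]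
  have h1 : Real.log (Real.exp (Real.exp 1) + x) ≤ Real.exp 1 + 1 := by
    rw [Real.log_le_iff_le_exp (by positivity), Real.exp_add]
    nlinarith
  have h0 : (0:ℝ) < Real.log (Real.exp (Real.exp 1) + x) :=
    lt_of_lt_of_le (Real.exp_pos 1) (log_ee_ge hx.le)
  calc Real.log (Real.log (Real.exp (Real.exp 1) + x)) ≤ Real.log (Real.exp 1 + 1) :=
        Real.log_le_log h0 h1
  _ ≤ 2 := by
      rw [Real.log_le_iff_le_exp (by positivity)]
      rw [show (2:ℝ) = 1+1 by norm_num, Real.exp_add]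
      nlinarith


lemma key_lower {ε m J : ℝ} (hε : 0 < ε) (hε2 : ε ≤ 1/2) (hm0 : 0 < m) (hJl : m ≤ J)
    (hm22 : m ≤ 22/ε^3) :
    Real.exp (-5) * m ≤ J ^ (1/(1+ε) : ℝ) := by
  have hq1 : (0:ℝ) < 1+ε := by linarith
  have hinv1 : 1/(1+ε) ≤ 1 := by rw [div_le_one hq1]; linarith
  have hinv0 : (0:ℝ) ≤ 1/(1+ε) := (one_div_pos.mpr hq1).le
  have hexp51 : Real.exp (-5) ≤ 1 := by
    rw [Real.exp_neg]
    have h5 : (1:ℝ) ≤ Real.exp 5 := by linarith [Real.add_one_le_exp (5:ℝ)]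
    exact inv_le_one_of_one_le₀ h5
  rcases le_or_gt m 1 with hm1 | hm1
  · have h1 : m ^ ((1:ℝ)) ≤ m ^ (1/(1+ε) : ℝ) :=
      Real.rpow_le_rpow_of_exponent_ge hm0 hm1 hinv1
    rw [Real.rpow_one] at h1
    have h2 : m ^ (1/(1+ε) : ℝ) ≤ J ^ (1/(1+ε) : ℝ) :=
      Real.rpow_le_rpow hm0.le hJl hinv0
    have h3 : Real.exp (-5) * m ≤ m := by
      calc Real.exp (-5) * m ≤ 1 * m := mul_le_mul_of_nonneg_right hexp51 hm0.le
      _ = m := one_mul m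
    linarith
  · have hfrac : 1 - 1/(1+ε) ≤ ε := by
      have he : (1:ℝ) - 1/(1+ε) = ε/(1+ε) := by field_simp; ring
      rw [he]
      exact div_le_self hε.le (by linarith)
    have hlogm : Real.log m * ε ≤ 5 := by
      have h1 : Real.log m ≤ Real.log (22/ε^3) := Real.log_le_log hm0 hm22
      have h2 : Real.log (22/ε^3) = Real.log 22 - 3*Real.log ε := by
        rw [Real.log_div (by norm_num) (ne_of_gt (pow_pos hε 3)), Real.log_pow]
        push_cast; ring
      have h3 : -Real.log ε ≤ 1/ε := by
        rw [← Real.log_inv]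
        calc Real.log ε⁻¹ ≤ ε⁻¹ - 1 := Real.log_le_sub_one_of_pos (inv_pos.mpr hε)
        _ ≤ 1/ε := by rw [one_div]; linarith
      have h4 : Real.log m ≤ 4 + 3*(1/ε) := by
        have h22 := log22_le
        rw [h2] at h1
        linarith
      calc Real.log m * ε ≤ (4 + 3*(1/ε)) * ε := by
            apply mul_le_mul_of_nonneg_right h4 hε.le
      _ = 4*ε + 3 := by field_simp
      _ ≤ 5 := by linarith
    have hme : m ^ ((1:ℝ) - 1/(1+ε)) ≤ Real.exp 5 := by
      calc m ^ ((1:ℝ) - 1/(1+ε)) ≤ m ^ ε :=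
            Real.rpow_le_rpow_of_exponent_le hm1.le hfrac
      _ = Real.exp (Real.log m * ε) := by rw [Real.rpow_def_of_pos hm0]
      _ ≤ Real.exp 5 := Real.exp_le_exp.mpr hlogm
    have hpow_pos : 0 < m ^ ((1:ℝ) - 1/(1+ε)) := Real.rpow_pos_of_pos hm0 _
    have hsplit : m ^ (1/(1+ε) : ℝ) = m * (m ^ ((1:ℝ) - 1/(1+ε)))⁻¹ := by
      have hsum : m ^ (1/(1+ε) : ℝ) * m ^ ((1:ℝ) - 1/(1+ε)) = m := by
        rw [← Real.rpow_add hm0, show (1/(1+ε) + (1 - 1/(1+ε)) : ℝ) = 1 by ring,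
          Real.rpow_one]
      rw [show m * (m ^ ((1:ℝ) - 1/(1+ε)))⁻¹ = m / m ^ ((1:ℝ) - 1/(1+ε)) from
        (div_eq_mul_inv _ _).symm, eq_div_iff hpow_pos.ne']
      exact hsum
    have hinv : (Real.exp 5)⁻¹ ≤ (m ^ ((1:ℝ) - 1/(1+ε)))⁻¹ :=
      inv_anti₀ (Real.rpow_pos_of_pos hm0 _) hme
    have hkey : Real.exp (-5) * m ≤ m ^ (1/(1+ε) : ℝ) := by
      rw [hsplit, Real.exp_neg]
      calc (Real.exp 5)⁻¹ * m = m * (Real.exp 5)⁻¹ := by ring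
      _ ≤ m * (m ^ ((1:ℝ) - 1/(1+ε)))⁻¹ := mul_le_mul_of_nonneg_left hinv hm0.le
    exact le_trans hkey (Real.rpow_le_rpow hm0.le hJl hinv0)


end AuxStmt1

set_option maxHeartbeats 1000000 in
/-- For `Φ(t) = t log(e+t) logloglog(e^{e^e}+t)`,
`C_Φ((p+1)/2) ≃ (p/(p-1))² loglog(e^e + 1/(p-1))` uniformly in `p ∈ (1,∞)`. -/
theorem stmt1 : ∃ c₁ c₂ : ℝ, 0 < c₁ ∧ 0 < c₂ ∧ ∀ p : ℝ, 1 < p →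
    c₁ * ((p / (p - 1)) ^ 2 * Real.log (Real.log (Real.exp (Real.exp 1) + 1 / (p - 1)))) ≤
      BpConstR (fun t => t * Real.log (Real.exp 1 + t) *
        Real.log (Real.log (Real.log (Real.exp (Real.exp (Real.exp 1)) + t)))) ((p + 1) / 2) ∧
    BpConstR (fun t => t * Real.log (Real.exp 1 + t) *
        Real.log (Real.log (Real.log (Real.exp (Real.exp (Real.exp 1)) + t)))) ((p + 1) / 2) ≤
      c₂ * ((p / (p - 1)) ^ 2 * Real.log (Real.log (Real.exp (Real.exp 1) + 1 / (p - 1)))) := by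
  refine ⟨Real.exp (-10), 100, Real.exp_pos _, by norm_num, ?_⟩
  intro p hp
  have hp1 : (0:ℝ) < p - 1 := by linarith
  set ε : ℝ := (p-1)/2 with hε_def
  clear_value ε
  have hε : 0 < ε := by rw [hε_def]; linarith
  have h2ε : 1/(2*ε) = 1/(p-1) := by rw [hε_def]; ring_nf
  have hJu := J_upper hε
  have hJl := J_lower hε
  have hJl2 := J_lower2 hε
  rw [h2ε] at hJu hJl
  set L := Real.log (Real.log (Real.exp (Real.exp 1) + 1/(p-1))) with hL_def
  set J := ∫ t in Ioi (1:ℝ), t * Real.log (Real.exp 1 + t) *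
      Real.log (Real.log (Real.log (Real.exp (Real.exp (Real.exp 1)) + t))) / t ^ ((2:ℝ)+ε)
    with hJ_def
  clear_value L J
  have hL1 : (1:ℝ) ≤ L := by rw [hL_def]; exact loglog_ee_ge (one_div_pos.mpr hp1).le
  have hBp : BpConstR (fun t => t * Real.log (Real.exp 1 + t) *
      Real.log (Real.log (Real.log (Real.exp (Real.exp (Real.exp 1)) + t)))) ((p+1)/2)
      = J ^ (1/((p+1)/2) : ℝ) := by
    rw [BpConstR, hJ_def]
    congr 1
    refine setIntegral_congr_fun measurableSet_Ioi fun t ht => ?_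
    rw [show ((p+1)/2 + 1 : ℝ) = 2 + ε by rw [hε_def]; ring]
  rw [hBp]
  have hq : (1:ℝ)/((p+1)/2) = 1/(1+ε) := by rw [hε_def]; ring_nf
  rw [hq]
  have hq1 : (0:ℝ) < 1+ε := by linarith
  have hinv1 : 1/(1+ε) ≤ 1 := by rw [div_le_one hq1]; linarith
  have hinv0 : (0:ℝ) ≤ 1/(1+ε) := (one_div_pos.mpr hq1).le
  set P : ℝ := p/(p-1) with hP_def
  clear_value P
  have hP1 : (1:ℝ) ≤ P := by rw [hP_def, le_div_iff₀ hp1]; linarith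
  have hP0 : (0:ℝ) < P := lt_of_lt_of_le zero_lt_one hP1
  have hJ0 : (0:ℝ) ≤ J := le_trans (div_pos (by linarith) (pow_pos hε 2)).le hJl
  constructor
  · -- LOWER BOUND
    rcases le_or_gt p 2 with hp2 | hp2
    · -- p ≤ 2, ε ≤ 1/2
      have hε2 : ε ≤ 1/2 := by rw [hε_def]; linarith
      set m : ℝ := (3/50) * L / ε^2 with hm_def
      clear_value m
      have hm0 : (0:ℝ) < m := by rw [hm_def]; exact div_pos (by linarith) (pow_pos hε 2)
      have hP2 : P^2 ≤ 1/ε^2 := by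
        have h1e : P ≤ 1/ε := by
          rw [hP_def, hε_def, one_div_div, div_le_div_iff₀ hp1 hp1]
          nlinarith
        calc P^2 ≤ (1/ε)^2 := by nlinarith
        _ = 1/ε^2 := by rw [div_pow, one_pow]
      have hLle : L ≤ 22/ε := by
        have h := L_le22 hε hε2
        rw [h2ε] at h
        rw [hL_def]
        exact h
      have hm22 : m ≤ 22/ε^3 := by
        rw [hm_def, div_le_div_iff₀ (pow_pos hε 2) (pow_pos hε 3)]
        have hLε : L * ε ≤ 22 := (le_div_iff₀ hε).mp hLle
        nlinarith [mul_le_mul_of_nonneg_right hLε (sq_nonneg ε), hε.le, hL1,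
          mul_nonneg (mul_nonneg (by linarith : (0:ℝ) ≤ L) hε.le) (sq_nonneg ε)]
      have key := key_lower hε hε2 hm0 hJl hm22
      have hc10 : Real.exp (-10) ≤ Real.exp (-5) * (3/50) := by
        rw [Real.exp_neg, Real.exp_neg, show (10:ℝ) = 5+5 by norm_num, Real.exp_add, mul_inv]
        apply mul_le_mul_of_nonneg_left _ (by positivity)
        have h5 := exp5_ge
        calc (Real.exp 5)⁻¹ ≤ ((50:ℝ)/3)⁻¹ := inv_anti₀ (by norm_num) h5
        _ = 3/50 := by norm_num
      calc Real.exp (-10) * (P^2*L) ≤ Real.exp (-10) * ((1/ε^2)*L) := by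
            apply mul_le_mul_of_nonneg_left _ (Real.exp_pos _).le
            exact mul_le_mul_of_nonneg_right hP2 (by linarith)
      _ ≤ (Real.exp (-5)*(3/50)) * ((1/ε^2)*L) :=
            mul_le_mul_of_nonneg_right hc10
              (mul_nonneg (one_div_pos.mpr (pow_pos hε 2)).le (by linarith))
      _ = Real.exp (-5) * m := by rw [hm_def]; ring
      _ ≤ J ^ (1/(1+ε) : ℝ) := key
    · -- p > 2
      have h2 : (2:ℝ)^(-(1+ε)) ≤ J := hJl2
      have hpow : ((2:ℝ)^(-(1+ε)))^(1/(1+ε) : ℝ) = 1/2 := by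
        rw [← Real.rpow_mul (by norm_num : (0:ℝ) ≤ 2),
          show ((-(1+ε))*(1/(1+ε)) : ℝ) = -1 by field_simp,
          Real.rpow_neg_one]
        norm_num
      have hhalf : (1/2 : ℝ) ≤ J ^ (1/(1+ε) : ℝ) := by
        rw [← hpow]
        exact Real.rpow_le_rpow (Real.rpow_nonneg (by norm_num) _) h2 hinv0
      have hPle : P ≤ 2 := by rw [hP_def, div_le_iff₀ hp1]; linarith
      have hL2 : L ≤ 2 := by
        have hx1 : 1/(p-1) ≤ 1 := by rw [div_le_one hp1]; linarith
        rw [hL_def]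
        exact L_le_two (one_div_pos.mpr hp1) hx1
      have hexp : Real.exp (-10) ≤ 1/16 := by
        rw [Real.exp_neg]
        calc (Real.exp 10)⁻¹ ≤ ((16:ℝ))⁻¹ := inv_anti₀ (by norm_num) exp10_ge
        _ = 1/16 := by norm_num
      have hP4 : P^2 ≤ 4 := by nlinarith
      have h8 : P^2*L ≤ 8 := by
        have h4L : P^2*L ≤ 4*L := mul_le_mul_of_nonneg_right hP4 (by linarith)
        linarith
      calc Real.exp (-10) * (P^2*L) ≤ (1/16) * (P^2*L) :=
            mul_le_mul_of_nonneg_right hexp (mul_nonneg (sq_nonneg P) (by linarith))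
      _ ≤ (1/16) * 8 := by
            apply mul_le_mul_of_nonneg_left h8 (by norm_num)
      _ = 1/2 := by norm_num
      _ ≤ J ^ (1/(1+ε) : ℝ) := hhalf
  · -- UPPER BOUND
    have hee21 := ee_le21
    have hM := hJu.2
    have hXpos : (0:ℝ) ≤ 1/ε^2 + 2/ε :=
      add_nonneg (one_div_pos.mpr (pow_pos hε 2)).le (div_pos two_pos hε).le
    have hX : 1/ε^2 + 2/ε ≤ 4*P^2 := by
      have hPe : 2*P = 1/ε + 2 := by
        rw [hP_def, hε_def, one_div_div]
        field_simp
        ring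
      have h4P : 4*P^2 = (1/ε+2)^2 := by rw [← hPe]; ring
      have h1e : (0:ℝ) < 1/ε := one_div_pos.mpr hε
      have hsq : (1:ℝ)/ε^2 = (1/ε)^2 := by rw [div_pow, one_pow]
      have hdiff : 4*P^2 - (1/ε^2 + 2/ε) = 2/ε + 4 := by
        rw [h4P, hsq]; ring
      have h2e : (0:ℝ) ≤ 2/ε := (div_pos two_pos hε).le
      linarith
    have hM2 : (Real.exp (Real.exp 1) + 2*L)*(1/ε^2 + 2/ε) + 2/ε^2 + 2/ε
        ≤ 25*L*(1/ε^2+2/ε) := by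
      have hc : Real.exp (Real.exp 1) + 2*L + 2 ≤ 25*L := by linarith
      have key := mul_le_mul_of_nonneg_right hc hXpos
      have expand : (Real.exp (Real.exp 1) + 2*L + 2)*(1/ε^2 + 2/ε)
          = (Real.exp (Real.exp 1) + 2*L)*(1/ε^2 + 2/ε) + 2*(1/ε^2 + 2/ε) := by ring
      have hX2 : 2/ε^2 + 2/ε ≤ 2*(1/ε^2 + 2/ε) := by
        have h2e : (0:ℝ) ≤ 2/ε := (div_pos two_pos hε).le
        have : 2*(1/ε^2 + 2/ε) - (2/ε^2 + 2/ε) = 2/ε := by ring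
        linarith
      linarith
    have hMR : J ≤ 100*(P^2*L) := by
      have h3 : 25*L*(1/ε^2+2/ε) ≤ 25*L*(4*P^2) :=
        mul_le_mul_of_nonneg_left hX (by linarith)
      calc J ≤ (Real.exp (Real.exp 1) + 2*L)*(1/ε^2 + 2/ε) + 2/ε^2 + 2/ε := hM
      _ ≤ 25*L*(1/ε^2+2/ε) := hM2
      _ ≤ 25*L*(4*P^2) := h3
      _ = 100*(P^2*L) := by ring
    rcases le_or_gt J 1 with hJ1 | hJ1
    · calc J ^ (1/(1+ε) : ℝ) ≤ 1 := Real.rpow_le_one hJ0 hJ1 hinv0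
      _ ≤ 100*(P^2*L) := by
          have hPsq : (1:ℝ) ≤ P^2 := by nlinarith
          have : P^2*1 ≤ P^2*L := mul_le_mul_of_nonneg_left hL1 (by nlinarith)
          nlinarith
    · calc J ^ (1/(1+ε) : ℝ) ≤ J ^ (1:ℝ) :=
            Real.rpow_le_rpow_of_exponent_le hJ1.le hinv1
      _ = J := Real.rpow_one J
      _ ≤ 100*(P^2*L) := hMR
end
end

section
/- (Local mean oscillation decomposition) Let f be a measurable function on ℝⁿ and Q₀ a fixed cube. Then there exists a (possibly empty) sparse family S of cubes from the dyadic lattice D(Q₀) generated by Q₀ such that for almost every x ∈ Q₀: |f(x) − m_f(Q₀)| ≤ 2 Σ_{Q∈S} ω_{1/2^{n+2}}(f;Q)·χ_Q(x). -/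
open MeasureTheory ENNReal Set
noncomputable section

namespace Stmt14

variable {n : ℕ}

lemma cube_eq_pi (c : Rn n) (r : ℝ) :
    cube n c r = Set.pi Set.univ (fun i => Icc (c i - r) (c i + r)) := by
  ext y
  simp only [cube, mem_setOf_eq, Set.mem_pi, Set.mem_univ, forall_true_left, Set.mem_Icc, abs_le]
  constructor <;> (intro h i; have := h i; constructor <;> linarith [this.1, this.2])

lemma measurableSet_cube (c : Rn n) (r : ℝ) : MeasurableSet (cube n c r) := by
  rw [cube_eq_pi]; exact MeasurableSet.univ_pi (fun i => measurableSet_Icc)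

lemma volume_cube (c : Rn n) (r : ℝ) :
    volume (cube n c r) = (ENNReal.ofReal (2*r))^n := by
  have h : ∀ i : Fin n, volume (Icc (c i - r) (c i + r)) = ENNReal.ofReal (2*r) := by
    intro i; rw [Real.volume_Icc]; congr 1; ring
  rw [cube_eq_pi, volume_pi_pi]
  simp [h]

lemma closedBall_eq_cube (c : Rn n) {r : ℝ} (hr : 0 ≤ r) :
    Metric.closedBall c r = cube n c r := by
  ext y
  simp only [Metric.mem_closedBall, cube, mem_setOf_eq]
  rw [dist_pi_le_iff hr]
  simp [Real.dist_eq]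

lemma cube_ne_top (c : Rn n) (r : ℝ) : volume (cube n c r) ≠ ⊤ := by
  rw [volume_cube]; exact ENNReal.pow_ne_top ENNReal.ofReal_ne_top

lemma cube_pos (c : Rn n) {r : ℝ} (hr : 0 < r) : 0 < volume (cube n c r) := by
  rw [volume_cube]
  exact ENNReal.pow_pos (ENNReal.ofReal_pos.2 (by linarith)) n

/-! ### rearrangement lemmas -/

lemma rearr_nonneg (g : Rn n → ℝ) (Q : Set (Rn n)) (t : ℝ≥0∞) : 0 ≤ rearr g Q t :=
  Real.sInf_nonneg (fun _ hx => hx.1)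

lemma rearr_le {g : Rn n → ℝ} {Q : Set (Rn n)} {t : ℝ≥0∞} {s : ℝ} (h0 : 0 ≤ s)
    (h : volume {x ∈ Q | s < |g x|} ≤ t) : rearr g Q t ≤ s :=
  csInf_le ⟨0, fun _ hx => hx.1⟩ ⟨h0, h⟩

lemma distrib_set_nonempty {g : Rn n → ℝ} (hg : Measurable g) {Q : Set (Rn n)}
    (hQ : MeasurableSet Q) (hvol : volume Q ≠ ⊤) {t : ℝ≥0∞} (ht : 0 < t) :
    ∃ s : ℝ, 0 ≤ s ∧ volume {x ∈ Q | s < |g x|} ≤ t := by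
  by_contra hcon
  push_neg at hcon
  set A : ℕ → Set (Rn n) := fun k => {x ∈ Q | (k:ℝ) < |g x|} with hA
  have hmeas : ∀ k, MeasurableSet (A k) := fun k =>
    hQ.inter ((measurableSet_Ioi).preimage hg.abs)
  have hdir : Directed (fun x1 x2 => x1 ⊇ x2) A := by
    intro a b
    refine ⟨max a b, fun x hx => ⟨hx.1, lt_of_le_of_lt ?_ hx.2⟩,
      fun x hx => ⟨hx.1, lt_of_le_of_lt ?_ hx.2⟩⟩
    · exact_mod_cast le_max_left a b
    · exact_mod_cast le_max_right a b
  have hint : ⋂ k, A k = ∅ := by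
    ext x
    simp only [Set.mem_iInter, Set.mem_empty_iff_false, iff_false]
    intro h
    obtain ⟨k, hk⟩ := exists_nat_ge (|g x|)
    exact absurd (h k).2 (not_lt.2 hk)
  have h0 : volume (⋂ k, A k) = ⨅ k, volume (A k) := by
    refine Directed.measure_iInter (fun k => (hmeas k).nullMeasurableSet) hdir ⟨0, ?_⟩
    exact ne_top_of_le_ne_top hvol (measure_mono (fun x hx => hx.1))
  rw [hint, measure_empty] at h0
  have : t ≤ ⨅ k, volume (A k) := le_iInf (fun k => (hcon k (Nat.cast_nonneg k)).le)
  rw [← h0] at this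
  exact absurd (lt_of_lt_of_le ht this) (lt_irrefl 0)

lemma rearr_mem {g : Rn n → ℝ} (hg : Measurable g) {Q : Set (Rn n)}
    (hQ : MeasurableSet Q) (hvol : volume Q ≠ ⊤) {t : ℝ≥0∞} (ht : 0 < t) :
    volume {x ∈ Q | rearr g Q t < |g x|} ≤ t := by
  set R := rearr g Q t with hR
  have hne : {s : ℝ | 0 ≤ s ∧ volume {x ∈ Q | s < |g x|} ≤ t}.Nonempty :=
    distrib_set_nonempty hg hQ hvol ht
  have hbdd : BddBelow {s : ℝ | 0 ≤ s ∧ volume {x ∈ Q | s < |g x|} ≤ t} :=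
    ⟨0, fun _ hx => hx.1⟩
  have hsub : {x ∈ Q | R < |g x|} = ⋃ k : ℕ, {x ∈ Q | R + 1/(k+1) < |g x|} := by
    ext x
    simp only [mem_setOf_eq, Set.mem_iUnion]
    constructor
    · rintro ⟨hxQ, hx⟩
      obtain ⟨k, hk⟩ := exists_nat_one_div_lt (sub_pos.2 hx)
      exact ⟨k, hxQ, by push_cast at hk ⊢; linarith⟩
    · rintro ⟨k, hxQ, hx⟩
      have : (0:ℝ) < 1/((k:ℝ)+1) := by positivity
      exact ⟨hxQ, by linarith⟩
  have hub : ∀ k : ℕ, volume {x ∈ Q | R + 1/((k:ℝ)+1) < |g x|} ≤ t := by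
    intro k
    have hlt : R < R + 1/((k:ℝ)+1) := by
      have : (0:ℝ) < 1/((k:ℝ)+1) := by positivity
      linarith
    obtain ⟨s, hs, hslt⟩ := (csInf_lt_iff hbdd hne).1 hlt
    refine le_trans (measure_mono ?_) hs.2
    intro x hx
    exact ⟨hx.1, hslt.trans hx.2⟩
  rw [hsub]
  have key : ∀ a b : ℕ, a ≤ b →
      {x ∈ Q | R + 1/((a:ℝ)+1) < |g x|} ⊆ {x ∈ Q | R + 1/((b:ℝ)+1) < |g x|} := by
    intro a b hab x hx
    refine ⟨hx.1, lt_of_le_of_lt ?_ hx.2⟩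
    have hc : ((a:ℝ)+1) ≤ ((b:ℝ)+1) := by exact_mod_cast by omega
    have : (1:ℝ)/((b:ℝ)+1) ≤ 1/((a:ℝ)+1) :=
      one_div_le_one_div_of_le (by positivity) hc
    linarith
  have hdir : Directed (fun x1 x2 => x1 ⊆ x2) (fun k : ℕ => {x ∈ Q | R + 1/((k:ℝ)+1) < |g x|}) :=
    fun a b => ⟨max a b, key a _ (le_max_left a b), key b _ (le_max_right a b)⟩
  rw [hdir.measure_iUnion]
  exact iSup_le hub
lemma osc_nonneg (lam : ℝ) (f : Rn n → ℝ) (Q : Set (Rn n)) : 0 ≤ osc lam f Q :=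
  Real.iInf_nonneg (fun _ => rearr_nonneg _ _ _)

lemma partition_vol {Q A : Set (Rn n)} (hA : MeasurableSet A) :
    volume (Q ∩ A) + volume (Q \ A) = volume Q :=
  measure_inter_add_diff Q hA

lemma median_dist {f : Rn n → ℝ} (hf : Measurable f) {Q : Set (Rn n)}
    (hQ : MeasurableSet Q) (hvol : volume Q ≠ ⊤)
    {m' : ℝ} (hm : IsMedian f Q m') {c s : ℝ} (hs : 0 ≤ s)
    (hd : volume {x ∈ Q | s < |f x - c|} < volume Q / 2) : |m' - c| ≤ s := by
  have hmeasA : MeasurableSet {y : Rn n | s < |f y - c|} :=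
    measurableSet_lt measurable_const ((hf.sub measurable_const).abs)
  have hpart : volume {x ∈ Q | s < |f x - c|} + volume {x ∈ Q | ¬ s < |f x - c|} = volume Q := by
    have h1 : {x ∈ Q | s < |f x - c|} = Q ∩ {y | s < |f y - c|} := by
      ext x; simp only [mem_setOf_eq, Set.mem_inter_iff]
    have h2 : {x ∈ Q | ¬ s < |f x - c|} = Q \ {y | s < |f y - c|} := by
      ext x; simp only [mem_setOf_eq, Set.mem_diff]
    rw [h1, h2]; exact partition_vol hmeasA
  have hQhalf : volume {x ∈ Q | ¬ s < |f x - c|} ≠ ⊤ :=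
    ne_top_of_le_ne_top hvol (measure_mono (fun x hx => hx.1))
  rw [abs_le]
  constructor
  · -- c - s ≤ m' ; suppose m' < c - s
    by_contra h
    push_neg at h
    have hsub : {x ∈ Q | ¬ s < |f x - c|} ⊆ {x ∈ Q | m' < f x} := by
      intro x hx
      refine ⟨hx.1, ?_⟩
      have := hx.2; rw [not_lt, abs_le] at this
      linarith [this.1]
    have : volume Q < volume Q := by
      calc volume Q = volume {x ∈ Q | s < |f x - c|} + volume {x ∈ Q | ¬ s < |f x - c|} :=
            hpart.symm
        _ ≤ volume {x ∈ Q | s < |f x - c|} + volume {x ∈ Q | m' < f x} := by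
            exact add_le_add_right (measure_mono hsub) _
        _ < volume Q / 2 + volume Q / 2 := by
            exact ENNReal.add_lt_add_of_lt_of_le
              (ne_top_of_le_ne_top hvol (measure_mono (fun x hx => hx.1))) hd hm.1
        _ = volume Q := ENNReal.add_halves _
    exact absurd this (lt_irrefl _)
  · by_contra h
    push_neg at h
    have hsub : {x ∈ Q | ¬ s < |f x - c|} ⊆ {x ∈ Q | f x < m'} := by
      intro x hx
      refine ⟨hx.1, ?_⟩
      have := hx.2; rw [not_lt, abs_le] at this
      linarith [this.2]
    have : volume Q < volume Q := by
      calc volume Q = volume {x ∈ Q | s < |f x - c|} + volume {x ∈ Q | ¬ s < |f x - c|} :=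
            hpart.symm
        _ ≤ volume {x ∈ Q | s < |f x - c|} + volume {x ∈ Q | f x < m'} := by
            exact add_le_add_right (measure_mono hsub) _
        _ < volume Q / 2 + volume Q / 2 :=
            ENNReal.add_lt_add_of_lt_of_le
              (ne_top_of_le_ne_top hvol (measure_mono (fun x hx => hx.1))) hd hm.2
        _ = volume Q := ENNReal.add_halves _
    exact absurd this (lt_irrefl _)

/-- `C'`: the distribution bound for a median. -/
lemma key_dist {f : Rn n → ℝ} (hf : Measurable f) {Q : Set (Rn n)}
    (hQ : MeasurableSet Q) (hvol : volume Q ≠ ⊤) (hpos : 0 < volume Q)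
    {m' : ℝ} (hm : IsMedian f Q m') {lam : ℝ} (hlam0 : 0 < lam) (hlam : lam ≤ 1/4) :
    volume {x ∈ Q | 2 * osc lam f Q < |f x - m'|} ≤ ENNReal.ofReal lam * volume Q := by
  set t : ℝ≥0∞ := ENNReal.ofReal lam * volume Q with hT
  have ht : 0 < t := by
    apply ENNReal.mul_pos
    · exact (ENNReal.ofReal_pos.2 hlam0).ne'
    · exact hpos.ne'
  have htlt : t < volume Q / 2 := by
    have h1 : ENNReal.ofReal lam ≤ ENNReal.ofReal (1/4) := ENNReal.ofReal_le_ofReal hlam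
    have h2 : (ENNReal.ofReal (1/4)) = (4:ℝ≥0∞)⁻¹ := by
      rw [show (1:ℝ)/4 = (4:ℝ)⁻¹ by norm_num]
      rw [ENNReal.ofReal_inv_of_pos (by norm_num)]
      norm_num
    calc t ≤ (4:ℝ≥0∞)⁻¹ * volume Q := by rw [hT, ← h2]; gcongr
      _ < 2⁻¹ * volume Q := by
          apply ENNReal.mul_lt_mul_left hpos.ne' hvol
          rw [ENNReal.inv_lt_inv]; norm_num
      _ = volume Q / 2 := by rw [ENNReal.div_eq_inv_mul]
  -- rearr of f - m' is ≤ 2 rearr of f - c for every c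
  have hkey : ∀ c : ℝ, rearr (fun x => f x - m') Q t ≤ 2 * rearr (fun x => f x - c) Q t := by
    intro c
    set sc := rearr (fun x => f x - c) Q t with hsc
    have hsc0 : 0 ≤ sc := rearr_nonneg _ _ _
    have hdc : volume {x ∈ Q | sc < |f x - c|} ≤ t :=
      rearr_mem (hf.sub measurable_const) hQ hvol ht
    have hmc : |m' - c| ≤ sc :=
      median_dist hf hQ hvol hm hsc0 (lt_of_le_of_lt hdc htlt)
    have : rearr (fun x => f x - m') Q t ≤ sc + |m' - c| := by
      apply rearr_le (by positivity)
      refine le_trans (measure_mono ?_) hdc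
      intro x hx
      refine ⟨hx.1, ?_⟩
      have h2 := hx.2
      have : |f x - c| ≥ |f x - m'| - |m' - c| := by
        have := abs_sub_abs_le_abs_sub (f x - m') (c - m')
        have h3 : |c - m'| = |m' - c| := abs_sub_comm c m'
        have h4 : (f x - m') - (c - m') = f x - c := by ring
        rw [h4, h3] at this
        linarith [this, abs_sub_abs_le_abs_sub (f x - m') (m' - c)]
      linarith
    linarith [this, hmc]
  have hro : rearr (fun x => f x - m') Q t ≤ 2 * osc lam f Q := by
    have h1 : rearr (fun x => f x - m') Q t / 2 ≤ osc lam f Q := by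
      apply le_ciInf
      intro c
      linarith [hkey c]
    linarith
  calc volume {x ∈ Q | 2 * osc lam f Q < |f x - m'|}
      ≤ volume {x ∈ Q | rearr (fun x => f x - m') Q t < |f x - m'|} := by
        apply measure_mono; intro x hx; exact ⟨hx.1, lt_of_le_of_lt hro hx.2⟩
    _ ≤ t := rearr_mem (g := fun x => f x - m') (hf.sub measurable_const) hQ hvol ht

lemma vol_dir_union_le {A : ℕ → Set (Rn n)} (hdir : Directed (fun a b => a ⊆ b) A)
    {t : ℝ≥0∞} (h : ∀ k, volume (A k) ≤ t) : volume (⋃ k, A k) ≤ t := by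
  rw [hdir.measure_iUnion]; exact iSup_le h

/-- Existence of a median. -/
lemma med_exists {f : Rn n → ℝ} (hf : Measurable f) {Q : Set (Rn n)}
    (hQ : MeasurableSet Q) (hvol : volume Q ≠ ⊤) (hpos : 0 < volume Q) :
    ∃ m' : ℝ, IsMedian f Q m' := by
  set T : Set ℝ := {m | volume {x ∈ Q | m < f x} ≤ volume Q / 2} with hT
  have hhalfpos : 0 < volume Q / 2 := ENNReal.div_pos hpos.ne' (by norm_num)
  have hanti : ∀ m m' : ℝ, m ≤ m' → volume {x ∈ Q | m' < f x} ≤ volume {x ∈ Q | m < f x} := by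
    intro m m' hmm
    exact measure_mono (fun x hx => ⟨hx.1, lt_of_le_of_lt hmm hx.2⟩)
  have hTne : T.Nonempty := by
    obtain ⟨s, hs0, hs⟩ := distrib_set_nonempty hf hQ hvol hhalfpos
    refine ⟨s, le_trans (measure_mono ?_) hs⟩
    intro x hx
    exact ⟨hx.1, lt_of_lt_of_le hx.2 (le_abs_self _)⟩
  have hTbdd : BddBelow T := by
    by_contra hb
    rw [not_bddBelow_iff] at hb
    have hup : ∀ k : ℕ, volume {x ∈ Q | (-(k:ℝ)) < f x} ≤ volume Q / 2 := by
      intro k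
      obtain ⟨m, hmT, hmk⟩ := hb (-(k:ℝ))
      exact le_trans (hanti m _ hmk.le) hmT
    have hcup : (⋃ k : ℕ, {x ∈ Q | (-(k:ℝ)) < f x}) = Q := by
      ext x
      simp only [Set.mem_iUnion, mem_setOf_eq]
      constructor
      · rintro ⟨k, h⟩; exact h.1
      · intro hx
        obtain ⟨k, hk⟩ := exists_nat_ge (-(f x))
        exact ⟨k + 1, hx, by push_cast; linarith⟩
    have hdir : Directed (fun a b => a ⊆ b) (fun k : ℕ => {x ∈ Q | (-(k:ℝ)) < f x}) := by
      intro a b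
      have h1 : (-((max a b : ℕ):ℝ)) ≤ -((a:ℝ)) := neg_le_neg (by exact_mod_cast le_max_left a b)
      have h2 : (-((max a b : ℕ):ℝ)) ≤ -((b:ℝ)) := neg_le_neg (by exact_mod_cast le_max_right a b)
      exact ⟨max a b, fun x hx => ⟨hx.1, lt_of_le_of_lt h1 hx.2⟩,
        fun x hx => ⟨hx.1, lt_of_le_of_lt h2 hx.2⟩⟩
    have hle : volume Q ≤ volume Q / 2 := by
      have h3 := vol_dir_union_le hdir hup
      rw [hcup] at h3; exact h3
    exact absurd (lt_of_le_of_lt hle (ENNReal.half_lt_self hpos.ne' hvol)) (lt_irrefl _)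
  set m' := sInf T with hm'
  refine ⟨m', ?_, ?_⟩
  · have hsub : {x ∈ Q | m' < f x} = ⋃ k : ℕ, {x ∈ Q | m' + 1/((k:ℝ)+1) < f x} := by
      ext x
      simp only [mem_setOf_eq, Set.mem_iUnion]
      constructor
      · rintro ⟨hxQ, hx⟩
        obtain ⟨k, hk⟩ := exists_nat_one_div_lt (sub_pos.2 hx)
        exact ⟨k, hxQ, by linarith⟩
      · rintro ⟨k, hxQ, hx⟩
        have : (0:ℝ) < 1/((k:ℝ)+1) := by positivity
        exact ⟨hxQ, by linarith⟩
    rw [hsub]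
    have hc : ∀ u v : ℕ, u ≤ v → (1:ℝ)/((v:ℝ)+1) ≤ 1/((u:ℝ)+1) := by
      intro u v huv
      have : ((u:ℝ)+1) ≤ ((v:ℝ)+1) := by
        have : (u:ℝ) ≤ (v:ℝ) := by exact_mod_cast huv
        linarith
      exact one_div_le_one_div_of_le (by positivity) this
    have hdir : Directed (fun a b => a ⊆ b)
        (fun k : ℕ => {x ∈ Q | m' + 1/((k:ℝ)+1) < f x}) := by
      intro a b
      refine ⟨max a b, fun x hx => ⟨hx.1, lt_of_le_of_lt ?_ hx.2⟩,
        fun x hx => ⟨hx.1, lt_of_le_of_lt ?_ hx.2⟩⟩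
      · linarith [hc a (max a b) (le_max_left a b)]
      · linarith [hc b (max a b) (le_max_right a b)]
    refine vol_dir_union_le hdir ?_
    intro k
    have hlt : m' < m' + 1/((k:ℝ)+1) := by
      have : (0:ℝ) < 1/((k:ℝ)+1) := by positivity
      linarith
    obtain ⟨mm, hmT, hmlt⟩ := (csInf_lt_iff hTbdd hTne).1 hlt
    exact le_trans (hanti mm _ hmlt.le) hmT
  · have hsub : {x ∈ Q | f x < m'} = ⋃ k : ℕ, {x ∈ Q | f x ≤ m' - 1/((k:ℝ)+1)} := by
      ext x
      simp only [mem_setOf_eq, Set.mem_iUnion]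
      constructor
      · rintro ⟨hxQ, hx⟩
        obtain ⟨k, hk⟩ := exists_nat_one_div_lt (sub_pos.2 hx)
        exact ⟨k, hxQ, by linarith⟩
      · rintro ⟨k, hxQ, hx⟩
        have : (0:ℝ) < 1/((k:ℝ)+1) := by positivity
        exact ⟨hxQ, by linarith⟩
    rw [hsub]
    have hc : ∀ u v : ℕ, u ≤ v → (1:ℝ)/((v:ℝ)+1) ≤ 1/((u:ℝ)+1) := by
      intro u v huv
      have : ((u:ℝ)+1) ≤ ((v:ℝ)+1) := by
        have : (u:ℝ) ≤ (v:ℝ) := by exact_mod_cast huv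
        linarith
      exact one_div_le_one_div_of_le (by positivity) this
    have hdir : Directed (fun a b => a ⊆ b)
        (fun k : ℕ => {x ∈ Q | f x ≤ m' - 1/((k:ℝ)+1)}) := by
      intro a b
      refine ⟨max a b, fun x hx => ⟨hx.1, ?_⟩, fun x hx => ⟨hx.1, ?_⟩⟩
      · linarith [hx.2, hc a (max a b) (le_max_left a b)]
      · linarith [hx.2, hc b (max a b) (le_max_right a b)]
    refine vol_dir_union_le hdir ?_
    intro k
    set mm := m' - 1/((k:ℝ)+1) with hmm
    have hmmlt : mm < m' := by
      have : (0:ℝ) < 1/((k:ℝ)+1) := by positivity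
      rw [hmm]; linarith
    have hnotT : mm ∉ T := fun hmem => absurd (csInf_le hTbdd hmem) (not_le.2 hmmlt)
    have hgt : volume Q / 2 < volume {x ∈ Q | mm < f x} := by
      rw [hT] at hnotT; exact not_le.1 hnotT
    by_contra hcon
    push_neg at hcon
    have hpartA : MeasurableSet {y : Rn n | mm < f y} :=
      measurableSet_lt measurable_const hf
    have hpart : volume {x ∈ Q | mm < f x} + volume {x ∈ Q | f x ≤ mm} = volume Q := by
      have h1 : {x ∈ Q | mm < f x} = Q ∩ {y | mm < f y} := by
        ext x; simp only [mem_setOf_eq, Set.mem_inter_iff]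
      have h2 : {x ∈ Q | f x ≤ mm} = Q \ {y | mm < f y} := by
        ext x; simp only [mem_setOf_eq, Set.mem_diff, not_lt]
      rw [h1, h2]; exact partition_vol hpartA
    have : volume Q < volume Q := by
      calc volume Q = volume Q / 2 + volume Q / 2 := (ENNReal.add_halves _).symm
        _ < volume {x ∈ Q | mm < f x} + volume {x ∈ Q | f x ≤ mm} :=
            ENNReal.add_lt_add hgt hcon
        _ = volume Q := hpart
    exact absurd this (lt_irrefl _)

/-- Clamped median. -/
lemma med_clamp {f : Rn n → ℝ} {Q : Set (Rn n)} {m₀ : ℝ} (hm0 : IsMedian f Q m₀)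
    {β mQ : ℝ} (hβ : 0 ≤ β)
    (h : volume {x ∈ Q | β < |f x - mQ|} ≤ volume Q / 2) :
    ∃ m' : ℝ, IsMedian f Q m' ∧ |m' - mQ| ≤ β := by
  set m' := max (mQ - β) (min m₀ (mQ + β)) with hm'
  have hub : m' ≤ mQ + β := max_le (by linarith) (min_le_right _ _)
  have hlb : mQ - β ≤ m' := le_max_left _ _
  refine ⟨m', ⟨?_, ?_⟩, by rw [abs_le]; constructor <;> linarith⟩
  · rcases le_or_gt m₀ m' with h1 | h1
    · refine le_trans (measure_mono ?_) hm0.1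
      intro x hx; exact ⟨hx.1, lt_of_le_of_lt h1 hx.2⟩
    · have hge : mQ + β ≤ m' := by
        rcases le_total m₀ (mQ + β) with h2 | h2
        · have heq : min m₀ (mQ + β) = m₀ := min_eq_left h2
          rw [hm', heq] at h1
          exact absurd (le_max_right (mQ - β) m₀) (not_le.2 h1)
        · have heq : min m₀ (mQ + β) = mQ + β := min_eq_right h2
          rw [hm', heq]
          exact le_max_right _ _
      refine le_trans (measure_mono ?_) h
      intro x hx
      refine ⟨hx.1, ?_⟩
      have hfx : mQ + β < f x := lt_of_le_of_lt hge hx.2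
      calc β < f x - mQ := by linarith
        _ ≤ |f x - mQ| := le_abs_self _
  · rcases le_or_gt m' m₀ with h1 | h1
    · refine le_trans (measure_mono ?_) hm0.2
      intro x hx; exact ⟨hx.1, lt_of_lt_of_le hx.2 h1⟩
    · have hle : m' ≤ mQ - β := by
        rcases max_choice (mQ - β) (min m₀ (mQ + β)) with hc | hc
        · rw [hm', hc]
        · rw [hm'] at h1 ⊢
          rw [hc] at h1 ⊢
          exact absurd (min_le_left m₀ (mQ + β)) (not_le.2 h1)
      refine le_trans (measure_mono ?_) h
      intro x hx
      refine ⟨hx.1, ?_⟩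
      have hfx : f x < mQ - β := lt_of_lt_of_le hx.2 hle
      calc β < mQ - f x := by linarith
        _ ≤ |f x - mQ| := by rw [abs_sub_comm]; exact le_abs_self _

/-! ### Dyadic lattice -/

variable (n) in
def dValid (p : ℕ × (Fin n → ℕ)) : Prop := ∀ i, p.2 i < 2 ^ p.1

variable (n) in
def dSub (q p : ℕ × (Fin n → ℕ)) : Prop :=
  p.1 ≤ q.1 ∧ ∀ i, p.2 i * 2 ^ (q.1 - p.1) ≤ q.2 i ∧ q.2 i + 1 ≤ (p.2 i + 1) * 2 ^ (q.1 - p.1)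

def dC (n : ℕ) (c₀ : Rn n) (r₀ : ℝ) (p : ℕ × (Fin n → ℕ)) : Set (Rn n) :=
  cube n (fun i => c₀ i - r₀ + (2 * ((p.2 i : ℝ)) + 1) * (r₀ / 2 ^ p.1)) (r₀ / 2 ^ p.1)

variable {c₀ : Rn n} {r₀ : ℝ}

lemma mem_dyadicSub {p : ℕ × (Fin n → ℕ)} (hp : dValid n p) :
    dC n c₀ r₀ p ∈ dyadicSub n c₀ r₀ := ⟨p.1, p.2, hp, rfl⟩

lemma sl_split {kp kq : ℕ} (h : kp ≤ kq) : (r₀/2^kp) = 2^(kq-kp) * (r₀/2^kq) := by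
  have h2 : (2:ℝ)^kq = 2^(kq-kp) * 2^kp := by rw [← pow_add]; congr 1; omega
  rw [h2]
  have h3 : (2:ℝ)^kp ≠ 0 := by positivity
  have h4 : (2:ℝ)^(kq-kp) ≠ 0 := by positivity
  field_simp

lemma dC_eq_pi (p : ℕ × (Fin n → ℕ)) :
    dC n c₀ r₀ p = Set.pi Set.univ (fun i =>
      Icc (c₀ i - r₀ + (p.2 i : ℝ) * (2*(r₀/2^p.1)))
          (c₀ i - r₀ + ((p.2 i : ℝ) + 1) * (2*(r₀/2^p.1)))) := by
  rw [dC, cube_eq_pi]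
  refine congrArg (Set.pi Set.univ) (funext fun i => ?_)
  congr 1 <;> ring

lemma measurableSet_dC (p : ℕ × (Fin n → ℕ)) : MeasurableSet (dC n c₀ r₀ p) :=
  measurableSet_cube _ _

lemma vol_dC (p : ℕ × (Fin n → ℕ)) :
    volume (dC n c₀ r₀ p) = (ENNReal.ofReal (2*(r₀/2^p.1)))^n := by
  rw [dC, volume_cube]

lemma vol_dC_pos (hr₀ : 0 < r₀) (p : ℕ × (Fin n → ℕ)) : 0 < volume (dC n c₀ r₀ p) :=
  cube_pos _ (by positivity)

lemma vol_dC_ne_top (p : ℕ × (Fin n → ℕ)) : volume (dC n c₀ r₀ p) ≠ ⊤ :=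
  cube_ne_top _ _

lemma dSub_refl (p : ℕ × (Fin n → ℕ)) : dSub n p p := by
  refine ⟨le_refl _, fun i => ?_⟩
  simp

lemma dSub_level_le {q p : ℕ × (Fin n → ℕ)} (h : dSub n q p) : p.1 ≤ q.1 := h.1

lemma dSub_level_eq {q p : ℕ × (Fin n → ℕ)} (h : dSub n q p) (hl : q.1 = p.1) : q = p := by
  have h2 := h.2
  rw [hl] at h2  -- exponent becomes p.1 - p.1
  simp at h2
  have : q.2 = p.2 := by
    funext i
    have := h2 i
    omega
  exact Prod.ext hl this

lemma dSub_ne_level_lt {q p : ℕ × (Fin n → ℕ)} (h : dSub n q p) (hne : q ≠ p) : p.1 < q.1 := by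
  rcases lt_or_eq_of_le h.1 with h1 | h1
  · exact h1
  · exact absurd (dSub_level_eq h h1.symm) hne

lemma dSub_valid {q p : ℕ × (Fin n → ℕ)} (h : dSub n q p) (hp : dValid n p) : dValid n q := by
  intro i
  have h0 : p.1 ≤ q.1 := h.1
  have h1 := (h.2 i).2
  have h2 : p.2 i + 1 ≤ 2^p.1 := hp i
  have h3 : (p.2 i + 1) * 2^(q.1-p.1) ≤ 2^p.1 * 2^(q.1-p.1) := Nat.mul_le_mul_right _ h2
  have h4 : 2^p.1 * 2^(q.1-p.1) = 2^q.1 := by rw [← pow_add]; congr 1; omega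
  calc q.2 i < q.2 i + 1 := Nat.lt_succ_self _
    _ ≤ (p.2 i + 1) * 2^(q.1-p.1) := h1
    _ ≤ 2^p.1 * 2^(q.1-p.1) := h3
    _ = 2^q.1 := h4

lemma dSub_subset (hr₀ : 0 < r₀) {q p : ℕ × (Fin n → ℕ)} (h : dSub n q p) :
    dC n c₀ r₀ q ⊆ dC n c₀ r₀ p := by
  intro x hx
  rw [dC_eq_pi] at hx ⊢
  intro i _
  have hxi := hx i (Set.mem_univ i)
  simp only [Set.mem_Icc] at hxi ⊢
  set m := q.1 - p.1 with hm
  have hsq : 0 ≤ 2*(r₀/2^q.1) := by positivity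
  have hsp : 2*(r₀/2^p.1) = 2^m * (2*(r₀/2^q.1)) := by
    rw [sl_split h.1]; ring
  have hc1 : ((p.2 i * 2^m : ℕ) : ℝ) ≤ ((q.2 i : ℕ) : ℝ) := by exact_mod_cast (h.2 i).1
  have hc2 : ((q.2 i + 1 : ℕ) : ℝ) ≤ (((p.2 i + 1) * 2^m : ℕ) : ℝ) := by exact_mod_cast (h.2 i).2
  push_cast at hc1 hc2
  constructor
  · have : (p.2 i : ℝ) * (2*(r₀/2^p.1)) ≤ (q.2 i : ℝ) * (2*(r₀/2^q.1)) := by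
      rw [hsp]
      calc (p.2 i : ℝ) * (2^m * (2*(r₀/2^q.1))) = ((p.2 i : ℝ) * 2^m) * (2*(r₀/2^q.1)) := by ring
        _ ≤ (q.2 i : ℝ) * (2*(r₀/2^q.1)) := mul_le_mul_of_nonneg_right hc1 hsq
    linarith [hxi.1]
  · have : ((q.2 i : ℝ) + 1) * (2*(r₀/2^q.1)) ≤ ((p.2 i : ℝ) + 1) * (2*(r₀/2^p.1)) := by
      rw [hsp]
      calc ((q.2 i : ℝ) + 1) * (2*(r₀/2^q.1)) ≤ (((p.2 i : ℝ)+1) * 2^m) * (2*(r₀/2^q.1)) :=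
            mul_le_mul_of_nonneg_right hc2 hsq
        _ = ((p.2 i : ℝ) + 1) * (2^m * (2*(r₀/2^q.1))) := by ring
    linarith [hxi.2]

/-- Non-nested dyadic cubes overlap in a null set. -/
lemma dj_null (hr₀ : 0 < r₀) {q p : ℕ × (Fin n → ℕ)} (hk : p.1 ≤ q.1) (hns : ¬ dSub n q p) :
    volume (dC n c₀ r₀ q ∩ dC n c₀ r₀ p) = 0 := by
  rw [dC_eq_pi, dC_eq_pi, ← Set.pi_inter_distrib]
  rw [volume_pi_pi]
  have hsq : 0 < 2*(r₀/2^q.1) := by positivity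
  have hsp : 2*(r₀/2^p.1) = 2^(q.1-p.1) * (2*(r₀/2^q.1)) := by
    rw [sl_split hk]; ring
  rw [dSub, not_and] at hns
  have h3 := hns hk
  push_neg at h3
  obtain ⟨i, hi⟩ := h3
  apply Finset.prod_eq_zero (Finset.mem_univ i)
  rw [Icc_inter_Icc, Real.volume_Icc]
  rw [ENNReal.ofReal_eq_zero]
  refine sub_nonpos.2 ?_
  rcases Nat.lt_or_ge (q.2 i) (p.2 i * 2^(q.1-p.1)) with hcase | hcase
  · -- q interval entirely left of p interval
    have hc : ((q.2 i : ℝ) + 1) ≤ (p.2 i : ℝ) * 2^(q.1-p.1) := by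
      have h5 : (q.2 i + 1 : ℕ) ≤ p.2 i * 2^(q.1-p.1) := hcase
      exact_mod_cast h5
    have hkey : ((q.2 i : ℝ) + 1) * (2*(r₀/2^q.1)) ≤ (p.2 i : ℝ) * (2*(r₀/2^p.1)) := by
      rw [hsp]
      calc ((q.2 i : ℝ) + 1) * (2*(r₀/2^q.1)) ≤ ((p.2 i : ℝ) * 2^(q.1-p.1)) * (2*(r₀/2^q.1)) :=
            mul_le_mul_of_nonneg_right hc hsq.le
        _ = (p.2 i : ℝ) * (2^(q.1-p.1) * (2*(r₀/2^q.1))) := by ring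
    calc (c₀ i - r₀ + ((q.2 i : ℝ) + 1) * (2*(r₀/2^q.1)))
          ⊓ (c₀ i - r₀ + ((p.2 i : ℝ) + 1) * (2*(r₀/2^p.1)))
        ≤ c₀ i - r₀ + ((q.2 i : ℝ) + 1) * (2*(r₀/2^q.1)) := inf_le_left
      _ ≤ c₀ i - r₀ + (p.2 i : ℝ) * (2*(r₀/2^p.1)) := by linarith [hkey]
      _ ≤ _ := le_sup_right
  · have hnc2 := hi hcase
    have hc : ((p.2 i : ℝ) + 1) * 2^(q.1-p.1) ≤ (q.2 i : ℝ) := by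
      have h5 : (p.2 i + 1) * 2^(q.1-p.1) ≤ q.2 i := by omega
      exact_mod_cast h5
    have hkey : ((p.2 i : ℝ) + 1) * (2*(r₀/2^p.1)) ≤ (q.2 i : ℝ) * (2*(r₀/2^q.1)) := by
      rw [hsp]
      calc ((p.2 i : ℝ) + 1) * (2^(q.1-p.1) * (2*(r₀/2^q.1)))
          = (((p.2 i : ℝ) + 1) * 2^(q.1-p.1)) * (2*(r₀/2^q.1)) := by ring
        _ ≤ (q.2 i : ℝ) * (2*(r₀/2^q.1)) := mul_le_mul_of_nonneg_right hc hsq.le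
    calc (c₀ i - r₀ + ((q.2 i : ℝ) + 1) * (2*(r₀/2^q.1)))
          ⊓ (c₀ i - r₀ + ((p.2 i : ℝ) + 1) * (2*(r₀/2^p.1)))
        ≤ c₀ i - r₀ + ((p.2 i : ℝ) + 1) * (2*(r₀/2^p.1)) := inf_le_right
      _ ≤ c₀ i - r₀ + (q.2 i : ℝ) * (2*(r₀/2^q.1)) := by linarith [hkey]
      _ ≤ _ := le_sup_left

def dPar (q : ℕ × (Fin n → ℕ)) : ℕ × (Fin n → ℕ) := (q.1 - 1, fun i => q.2 i / 2)

lemma dPar_sub {q : ℕ × (Fin n → ℕ)} (hq : 0 < q.1) : dSub n q (dPar q) := by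
  refine ⟨Nat.sub_le q.1 1, fun i => ?_⟩
  have hexp : q.1 - (dPar q).1 = 1 := by show q.1 - (q.1 - 1) = 1; omega
  rw [hexp, pow_one]
  show q.2 i / 2 * 2 ≤ q.2 i ∧ q.2 i + 1 ≤ (q.2 i / 2 + 1) * 2
  omega

lemma dPar_valid {q : ℕ × (Fin n → ℕ)} (hq : 0 < q.1) (h : dValid n q) : dValid n (dPar q) := by
  intro i
  have h1 := h i
  have h2 : 2^q.1 = 2*2^(q.1-1) := by
    rw [← pow_succ']; congr 1; omega
  show q.2 i / 2 < 2^(q.1 - 1)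
  omega

lemma dPar_level {q : ℕ × (Fin n → ℕ)} : (dPar q).1 = q.1 - 1 := rfl

lemma dSub_par {q p : ℕ × (Fin n → ℕ)} (h : dSub n q p) (hlt : p.1 < q.1) :
    dSub n (dPar q) p := by
  have hexp : q.1 - p.1 = ((dPar q).1 - p.1) + 1 := by
    show q.1 - p.1 = (q.1 - 1 - p.1) + 1; omega
  refine ⟨show p.1 ≤ q.1 - 1 by omega, fun i => ?_⟩
  have hc1 := (h.2 i).1
  have hc2 := (h.2 i).2
  rw [hexp, pow_succ] at hc1 hc2
  have hA : p.2 i * (2^((dPar q).1 - p.1) * 2) = 2 * (p.2 i * 2^((dPar q).1 - p.1)) := by ring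
  have hB : (p.2 i + 1) * (2^((dPar q).1 - p.1) * 2)
      = 2 * ((p.2 i + 1) * 2^((dPar q).1 - p.1)) := by ring
  rw [hA] at hc1
  rw [hB] at hc2
  show p.2 i * 2^((dPar q).1 - p.1) ≤ q.2 i / 2 ∧
    q.2 i / 2 + 1 ≤ (p.2 i + 1) * 2^((dPar q).1 - p.1)
  omega

lemma vol_dPar (hr₀ : 0 < r₀) {q : ℕ × (Fin n → ℕ)} (hq : 0 < q.1) :
    volume (dC n c₀ r₀ (dPar q)) = 2^n * volume (dC n c₀ r₀ q) := by
  rw [vol_dC, vol_dC]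
  have h1 : r₀/2^((dPar q).1) = 2 * (r₀/2^q.1) := by
    rw [dPar_level, sl_split (show q.1 - 1 ≤ q.1 by omega)]
    congr 1
    rw [show q.1 - (q.1 - 1) = 1 by omega, pow_one]
  rw [h1]
  have h2 : (2:ℝ) * (2 * (r₀/2^q.1)) = 2 * (2*(r₀/2^q.1)) := by ring
  rw [h2, ENNReal.ofReal_mul (by norm_num : (0:ℝ) ≤ 2)]
  rw [mul_pow, ENNReal.ofReal_ofNat]

/-- Covering a point of a dyadic cube by a descendant at a given level. -/
lemma cover_level (hr₀ : 0 < r₀) {p : ℕ × (Fin n → ℕ)} (hp : dValid n p) {K : ℕ} (hK : p.1 ≤ K)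
    {x : Rn n} (hx : x ∈ dC n c₀ r₀ p) :
    ∃ j : Fin n → ℕ, dValid n (K, j) ∧ dSub n (K, j) p ∧ x ∈ dC n c₀ r₀ (K, j) := by
  set s : ℝ := 2*(r₀/2^K) with hs
  have hspos : 0 < s := by positivity
  set m := K - p.1 with hm
  have hm2 : (1:ℕ) ≤ 2^m := Nat.one_le_two_pow
  have hsp : 2*(r₀/2^p.1) = 2^m * s := by
    rw [hs, sl_split hK]; ring
  rw [dC_eq_pi] at hx
  set j : Fin n → ℕ := fun i =>
    p.2 i * 2^m + min (⌊(x i - (c₀ i - r₀ + (p.2 i : ℝ) * (2*(r₀/2^p.1))))/s⌋₊) (2^m - 1) with hj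
  have key : ∀ i, (j i : ℝ) * s ≤ x i - (c₀ i - r₀) ∧
      x i - (c₀ i - r₀) ≤ ((j i : ℝ) + 1) * s ∧ j i + 1 ≤ (p.2 i + 1) * 2^m := by
    intro i
    have hxi := hx i (Set.mem_univ i)
    simp only [Set.mem_Icc] at hxi
    set t : ℝ := x i - (c₀ i - r₀ + (p.2 i : ℝ) * (2*(r₀/2^p.1))) with ht
    have ht0 : 0 ≤ t := by rw [ht]; linarith [hxi.1]
    have htub : t ≤ 2^m * s := by
      rw [ht]
      have := hxi.2
      rw [hsp] at this ⊢
      nlinarith [this]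
    set a : ℕ := min (⌊t/s⌋₊) (2^m - 1) with ha
    have hja : j i = p.2 i * 2^m + a := rfl
    have hf1 : (a:ℝ) * s ≤ t := by
      have h1 : (a:ℝ) ≤ ⌊t/s⌋₊ := by exact_mod_cast min_le_left _ _
      have h2 : (⌊t/s⌋₊ : ℝ) ≤ t/s := Nat.floor_le (by positivity)
      rw [← le_div_iff₀ hspos]
      linarith
    have hf2 : t ≤ ((a:ℝ)+1) * s := by
      rcases le_or_gt (⌊t/s⌋₊) (2^m - 1) with hcs | hcs
      · have haf : a = ⌊t/s⌋₊ := min_eq_left hcs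
        have h2 : t/s < (⌊t/s⌋₊ : ℝ) + 1 := Nat.lt_floor_add_one _
        rw [haf]
        rw [← div_le_iff₀ hspos] at *
        linarith
      · have haf : a = 2^m - 1 := min_eq_right (by omega)
        have h1 : a + 1 = 2^m := by omega
        have h2 : ((a:ℝ) + 1) = 2^m := by
          have h2' : ((a + 1 : ℕ) : ℝ) = ((2^m : ℕ) : ℝ) := by rw [h1]
          push_cast at h2'
          linarith
        rw [h2]
        exact htub
    refine ⟨?_, ?_, ?_⟩
    · rw [hja]
      push_cast
      have hexp : ((p.2 i : ℝ) * 2^m + (a:ℝ)) * s = (p.2 i : ℝ) * (2^m * s) + (a:ℝ)*s := by ring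
      rw [hexp, ← hsp]
      rw [ht] at hf1
      linarith
    · rw [hja]
      push_cast
      have hexp : ((p.2 i : ℝ) * 2^m + (a:ℝ) + 1) * s = (p.2 i : ℝ) * (2^m * s) + ((a:ℝ)+1)*s := by
        ring
      rw [hexp, ← hsp]
      rw [ht] at hf2
      linarith
    · have ha1 : a + 1 ≤ 2^m := by omega
      rw [hja]
      calc p.2 i * 2^m + a + 1 ≤ p.2 i * 2^m + 2^m := by omega
        _ = (p.2 i + 1) * 2^m := by ring
  have hvalid : dValid n (K, j) := by
    intro i
    have h1 := (key i).2.2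
    have h2 : (p.2 i + 1) * 2^m ≤ 2^p.1 * 2^m := Nat.mul_le_mul_right _ (hp i)
    have h3 : 2^p.1 * 2^m = 2^K := by rw [← pow_add]; congr 1; omega
    simp only []
    omega
  refine ⟨j, hvalid, ⟨hK, fun i => ⟨Nat.le_add_right _ _, (key i).2.2⟩⟩, ?_⟩
  rw [dC_eq_pi]
  intro i _
  simp only [Set.mem_Icc]
  have h1 := (key i).1
  have h2 := (key i).2.1
  constructor
  · rw [← hs] at *; linarith
  · rw [← hs] at *; linarith

lemma dC_subset_ball (hr₀ : 0 < r₀) {p : ℕ × (Fin n → ℕ)} {x : Rn n}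
    (hx : x ∈ dC n c₀ r₀ p) :
    dC n c₀ r₀ p ⊆ Metric.closedBall x (2*(r₀/2^p.1)) := by
  intro y hy
  rw [dC_eq_pi] at hx hy
  rw [Metric.mem_closedBall]
  rw [dist_pi_le_iff (by positivity)]
  intro i
  have h1 := hx i (Set.mem_univ i)
  have h2 := hy i (Set.mem_univ i)
  simp only [Set.mem_Icc] at h1 h2
  rw [Real.dist_eq, abs_le]
  constructor <;> nlinarith [h1.1, h1.2, h2.1, h2.2]

lemma vol_ball_eq (hr₀ : 0 < r₀) (x : Rn n) (k : ℕ) :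
    volume (Metric.closedBall x (2*(r₀/2^k))) = 2^n * volume (dC n c₀ r₀ (k, fun _ => 0)) := by
  rw [closedBall_eq_cube _ (by positivity), volume_cube, vol_dC]
  rw [ENNReal.ofReal_mul (by norm_num : (0:ℝ) ≤ 2), mul_pow, ENNReal.ofReal_ofNat]

/-! ### Stopping construction -/

variable (n) in
def tauC : ℝ≥0∞ := ((2:ℝ≥0∞)⁻¹)^(n+1)

variable (n) in
def lamE : ℝ≥0∞ := ((2:ℝ≥0∞)⁻¹)^(n+2)

def oscQ (f : Rn n → ℝ) (c₀ : Rn n) (r₀ : ℝ) (p : ℕ × (Fin n → ℕ)) : ℝ :=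
  osc ((1:ℝ)/2^(n+2)) f (dC n c₀ r₀ p)

def OmegaSet (f : Rn n → ℝ) (c₀ : Rn n) (r₀ : ℝ) (p : ℕ × (Fin n → ℕ)) (mp : ℝ) : Set (Rn n) :=
  {x ∈ dC n c₀ r₀ p | 2 * oscQ f c₀ r₀ p < |f x - mp|}

def stopSet (f : Rn n → ℝ) (c₀ : Rn n) (r₀ : ℝ) (p : ℕ × (Fin n → ℕ)) (mp : ℝ) :
    Set (ℕ × (Fin n → ℕ)) :=
  {q | dSub n q p ∧ q ≠ p ∧
    tauC n * volume (dC n c₀ r₀ q) < volume (dC n c₀ r₀ q ∩ OmegaSet f c₀ r₀ p mp) ∧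
    ∀ q', dSub n q' p → dSub n q q' → q' ≠ q →
      volume (dC n c₀ r₀ q' ∩ OmegaSet f c₀ r₀ p mp) ≤ tauC n * volume (dC n c₀ r₀ q')}

variable {f : Rn n → ℝ}

lemma half_ne_top' : ((2:ℝ≥0∞)⁻¹) ≠ ⊤ := by simp
lemma two_ne_zero' : ((2:ℝ≥0∞)) ≠ 0 := by norm_num
lemma two_ne_top' : ((2:ℝ≥0∞)) ≠ ⊤ := by simp

lemma two_mul_inv_cancel : (2:ℝ≥0∞) * (2:ℝ≥0∞)⁻¹ = 1 :=
  ENNReal.mul_inv_cancel two_ne_zero' two_ne_top'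

lemma pow_mul_tauC : (2:ℝ≥0∞)^(n+1) * tauC n = 1 := by
  rw [tauC, ← mul_pow, two_mul_inv_cancel, one_pow]

lemma tauC_mul_pow (v : ℝ≥0∞) : tauC n * ((2:ℝ≥0∞)^n * v) = 2⁻¹ * v := by
  rw [tauC, pow_succ, ← mul_assoc]
  congr 1
  rw [mul_comm ((2:ℝ≥0∞)⁻¹^n) (2:ℝ≥0∞)⁻¹, mul_assoc, ← mul_pow,
    mul_comm (2:ℝ≥0∞)⁻¹ 2, two_mul_inv_cancel, one_pow, mul_one]

lemma pow_mul_lamE : (2:ℝ≥0∞)^(n+1) * lamE n = 2⁻¹ := by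
  rw [lamE, show n+2 = (n+1)+1 by omega]
  rw [pow_succ ((2:ℝ≥0∞)⁻¹) (n+1), ← mul_assoc, ← mul_pow, two_mul_inv_cancel, one_pow, one_mul]

lemma ofReal_lam : ENNReal.ofReal ((1:ℝ)/2^(n+2)) = lamE n := by
  rw [lamE, show (1:ℝ)/2^(n+2) = ((1:ℝ)/2)^(n+2) by rw [div_pow, one_pow]]
  rw [ENNReal.ofReal_pow (by norm_num)]
  congr 1
  rw [one_div, ENNReal.ofReal_inv_of_pos (by norm_num)]
  norm_num

lemma lamE_le_tauC : lamE n ≤ tauC n := by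
  rw [lamE, tauC]
  exact pow_le_pow_of_le_one (zero_le) (ENNReal.inv_le_one.2 one_le_two) (by omega)

lemma meas_Omega (hf : Measurable f) (c₀ : Rn n) (r₀ : ℝ) (p : ℕ × (Fin n → ℕ)) (mp : ℝ) :
    MeasurableSet (OmegaSet f c₀ r₀ p mp) := by
  apply (measurableSet_dC p).inter
  exact measurableSet_lt measurable_const ((hf.sub measurable_const).abs)

lemma Omega_subset (c₀ : Rn n) (r₀ : ℝ) (p : ℕ × (Fin n → ℕ)) (mp : ℝ) :
    OmegaSet f c₀ r₀ p mp ⊆ dC n c₀ r₀ p := fun _ hx => hx.1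

lemma vol_Omega_le (hf : Measurable f) {c₀ : Rn n} {r₀ : ℝ} (hr₀ : 0 < r₀)
    {p : ℕ × (Fin n → ℕ)} {mp : ℝ} (hmp : IsMedian f (dC n c₀ r₀ p) mp) :
    volume (OmegaSet f c₀ r₀ p mp) ≤ lamE n * volume (dC n c₀ r₀ p) := by
  rw [← ofReal_lam]
  exact key_dist hf (measurableSet_dC p) (vol_dC_ne_top p) (vol_dC_pos hr₀ p) hmp
    (by positivity) (by
      rw [div_le_div_iff₀ (by positivity) (by norm_num)]
      have h1 : (4:ℝ) ≤ 2^(n+2) := by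
        calc (4:ℝ) = 2^2 := by norm_num
        _ ≤ 2^(n+2) := by
            apply pow_le_pow_right₀ (by norm_num)
            omega
      linarith)

lemma stop_pairwise_null {c₀ : Rn n} {r₀ : ℝ} (hr₀ : 0 < r₀)
    {p : ℕ × (Fin n → ℕ)} {mp : ℝ} {q q' : ℕ × (Fin n → ℕ)}
    (hq : q ∈ stopSet f c₀ r₀ p mp) (hq' : q' ∈ stopSet f c₀ r₀ p mp) (hne : q ≠ q') :
    volume (dC n c₀ r₀ q ∩ dC n c₀ r₀ q') = 0 := by
  have hns1 : ¬ dSub n q q' := fun hsub =>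
    absurd (hq.2.2.2 q' hq'.1 hsub (Ne.symm hne)) (not_le.2 hq'.2.2.1)
  have hns2 : ¬ dSub n q' q := fun hsub =>
    absurd (hq'.2.2.2 q hq.1 hsub hne) (not_le.2 hq.2.2.1)
  rcases le_total q.1 q'.1 with hl | hl
  · rw [Set.inter_comm]
    exact dj_null hr₀ hl hns2
  · exact dj_null hr₀ hl hns1

lemma stop_subhalf {c₀ : Rn n} {r₀ : ℝ} (hr₀ : 0 < r₀)
    {p : ℕ × (Fin n → ℕ)} {mp : ℝ} {q : ℕ × (Fin n → ℕ)}
    (hq : q ∈ stopSet f c₀ r₀ p mp) :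
    volume (dC n c₀ r₀ q ∩ OmegaSet f c₀ r₀ p mp) ≤ volume (dC n c₀ r₀ q) / 2 := by
  have hlev : p.1 < q.1 := dSub_ne_level_lt hq.1 hq.2.1
  have hq1 : 0 < q.1 := by omega
  have hparsub : dSub n (dPar q) p := dSub_par hq.1 hlev
  have hparne : dPar q ≠ q := by
    intro h
    have := congrArg Prod.fst h
    rw [dPar_level] at this
    omega
  have hmax := hq.2.2.2 (dPar q) hparsub (dPar_sub hq1) hparne
  have hsub : dC n c₀ r₀ q ⊆ dC n c₀ r₀ (dPar q) := dSub_subset hr₀ (dPar_sub hq1)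
  calc volume (dC n c₀ r₀ q ∩ OmegaSet f c₀ r₀ p mp)
      ≤ volume (dC n c₀ r₀ (dPar q) ∩ OmegaSet f c₀ r₀ p mp) :=
        measure_mono (Set.inter_subset_inter_left _ hsub)
    _ ≤ tauC n * volume (dC n c₀ r₀ (dPar q)) := hmax
    _ = tauC n * ((2:ℝ≥0∞)^n * volume (dC n c₀ r₀ q)) := by rw [vol_dPar hr₀ hq1]
    _ = 2⁻¹ * volume (dC n c₀ r₀ q) := tauC_mul_pow _
    _ = volume (dC n c₀ r₀ q) / 2 := by rw [ENNReal.div_eq_inv_mul]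

lemma child_median (hf : Measurable f) {c₀ : Rn n} {r₀ : ℝ} (hr₀ : 0 < r₀)
    {p : ℕ × (Fin n → ℕ)} {mp : ℝ} {q : ℕ × (Fin n → ℕ)}
    (hq : q ∈ stopSet f c₀ r₀ p mp) :
    ∃ m' : ℝ, IsMedian f (dC n c₀ r₀ q) m' ∧ |m' - mp| ≤ 2 * oscQ f c₀ r₀ p := by
  obtain ⟨m₀, hm₀⟩ := med_exists hf (measurableSet_dC q) (vol_dC_ne_top q) (vol_dC_pos hr₀ q)
  apply med_clamp hm₀
  · have := osc_nonneg ((1:ℝ)/2^(n+2)) f (dC n c₀ r₀ p)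
    rw [oscQ]; linarith
  · have hQsub : dC n c₀ r₀ q ⊆ dC n c₀ r₀ p := dSub_subset hr₀ hq.1
    have hset : {x ∈ dC n c₀ r₀ q | 2 * oscQ f c₀ r₀ p < |f x - mp|}
        = dC n c₀ r₀ q ∩ OmegaSet f c₀ r₀ p mp := by
      ext x
      simp only [mem_setOf_eq, Set.mem_inter_iff, OmegaSet]
      constructor
      · intro hx; exact ⟨hx.1, hQsub hx.1, hx.2⟩
      · intro hx; exact ⟨hx.1, hx.2.2⟩
    rw [hset]
    exact stop_subhalf hr₀ hq

lemma stop_sum (hf : Measurable f) {c₀ : Rn n} {r₀ : ℝ} (hr₀ : 0 < r₀)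
    {p : ℕ × (Fin n → ℕ)} {mp : ℝ} (hmp : IsMedian f (dC n c₀ r₀ p) mp) :
    volume (⋃ q ∈ stopSet f c₀ r₀ p mp, dC n c₀ r₀ q) ≤ volume (dC n c₀ r₀ p) / 2 := by
  have hcnt : (stopSet f c₀ r₀ p mp).Countable := Set.to_countable _
  haveI : Countable ↥(stopSet f c₀ r₀ p mp) := hcnt.to_subtype
  rw [Set.biUnion_eq_iUnion]
  calc volume (⋃ q : ↥(stopSet f c₀ r₀ p mp), dC n c₀ r₀ (q:ℕ × (Fin n → ℕ)))
      ≤ ∑' q : ↥(stopSet f c₀ r₀ p mp), volume (dC n c₀ r₀ (q:ℕ × (Fin n → ℕ))) :=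
        measure_iUnion_le _
    _ ≤ ∑' q : ↥(stopSet f c₀ r₀ p mp),
          (2:ℝ≥0∞)^(n+1) * volume (dC n c₀ r₀ (q:ℕ × (Fin n → ℕ)) ∩ OmegaSet f c₀ r₀ p mp) := by
        apply ENNReal.tsum_le_tsum
        intro q
        have hlt := q.2.2.2.1
        calc volume (dC n c₀ r₀ (q:ℕ × (Fin n → ℕ)))
            = (2:ℝ≥0∞)^(n+1) * (tauC n * volume (dC n c₀ r₀ (q:ℕ × (Fin n → ℕ)))) := by
              rw [← mul_assoc, pow_mul_tauC, one_mul]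
          _ ≤ (2:ℝ≥0∞)^(n+1) * volume (dC n c₀ r₀ (q:ℕ × (Fin n → ℕ)) ∩ OmegaSet f c₀ r₀ p mp) :=
              mul_le_mul_right hlt.le _
    _ = (2:ℝ≥0∞)^(n+1) * ∑' q : ↥(stopSet f c₀ r₀ p mp),
          volume (dC n c₀ r₀ (q:ℕ × (Fin n → ℕ)) ∩ OmegaSet f c₀ r₀ p mp) := ENNReal.tsum_mul_left
    _ = (2:ℝ≥0∞)^(n+1) * volume (⋃ q : ↥(stopSet f c₀ r₀ p mp),
          (dC n c₀ r₀ (q:ℕ × (Fin n → ℕ)) ∩ OmegaSet f c₀ r₀ p mp)) := by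
        congr 1
        refine (measure_iUnion₀ ?_ ?_).symm
        · intro q q' hne
          have hne' : (q:ℕ × (Fin n → ℕ)) ≠ (q':ℕ × (Fin n → ℕ)) := by
            intro h; exact hne (Subtype.ext h)
          apply measure_mono_null (t := dC n c₀ r₀ (q:ℕ × (Fin n → ℕ)) ∩ dC n c₀ r₀ (q':ℕ × (Fin n → ℕ)))
          · intro x hx
            exact ⟨hx.1.1, hx.2.1⟩
          · exact stop_pairwise_null hr₀ q.2 q'.2 hne'
        · intro q
          exact ((measurableSet_dC _).inter (meas_Omega hf _ _ _ _)).nullMeasurableSet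
    _ ≤ (2:ℝ≥0∞)^(n+1) * volume (OmegaSet f c₀ r₀ p mp) :=
        mul_le_mul_right (measure_mono (Set.iUnion_subset fun q => Set.inter_subset_right)) _
    _ ≤ (2:ℝ≥0∞)^(n+1) * (lamE n * volume (dC n c₀ r₀ p)) :=
        mul_le_mul_right (vol_Omega_le hf hr₀ hmp) _
    _ = volume (dC n c₀ r₀ p) / 2 := by
        rw [← mul_assoc, pow_mul_lamE, ENNReal.div_eq_inv_mul]

lemma lamE_ne_zero : lamE n ≠ 0 := by
  rw [lamE]
  apply pow_ne_zero
  simp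

lemma vol_dC_level (k : ℕ) (j j' : Fin n → ℕ) :
    volume (dC n c₀ r₀ (k, j)) = volume (dC n c₀ r₀ (k, j')) := by
  rw [vol_dC, vol_dC]

lemma pow_mul_lamE' : (2:ℝ≥0∞)^n * lamE n = 2⁻¹ * 2⁻¹ := by
  rw [lamE, show n+2 = n+1+1 by omega, pow_succ, pow_succ, ← mul_assoc]
  rw [show (2:ℝ≥0∞)^n * ((2:ℝ≥0∞)⁻¹^n * 2⁻¹) = ((2:ℝ≥0∞) * 2⁻¹)^n * 2⁻¹ by
    rw [mul_pow]; ring]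
  rw [two_mul_inv_cancel, one_pow, one_mul]

lemma tauC_le_half : tauC n ≤ 2⁻¹ := by
  rw [tauC]
  calc ((2:ℝ≥0∞)⁻¹)^(n+1) ≤ ((2:ℝ≥0∞)⁻¹)^1 :=
        pow_le_pow_of_le_one (zero_le) (ENNReal.inv_le_one.2 one_le_two) (by omega)
    _ = 2⁻¹ := pow_one _

/-- A.e. point of `Ω` is covered by a stopping cube. -/
lemma stop_cover (hf : Measurable f) {c₀ : Rn n} {r₀ : ℝ} (hr₀ : 0 < r₀)
    {p : ℕ × (Fin n → ℕ)} (hval : dValid n p) {mp : ℝ}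
    (hmp : IsMedian f (dC n c₀ r₀ p) mp) :
    ∀ᵐ x : Rn n, x ∈ OmegaSet f c₀ r₀ p mp →
      x ∈ ⋃ q ∈ stopSet f c₀ r₀ p mp, dC n c₀ r₀ q := by
  classical
  set s := OmegaSet f c₀ r₀ p mp with hs
  have hsm : MeasurableSet s := meas_Omega hf _ _ _ _
  have hbes := Besicovitch.ae_tendsto_measure_inter_div volume s
  rw [ae_restrict_iff' hsm] at hbes
  filter_upwards [hbes] with x hx hxs
  have htd := hx hxs
  have hxP : x ∈ dC n c₀ r₀ p := hxs.1
  -- eventually along small radii the density is > 1 - lamE n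
  have hlt1 : (1:ℝ≥0∞) - lamE n < 1 := ENNReal.sub_lt_self one_ne_top one_ne_zero lamE_ne_zero
  have hev : ∀ᶠ r in nhdsWithin 0 (Ioi 0),
      (1:ℝ≥0∞) - lamE n < volume (s ∩ Metric.closedBall x r) / volume (Metric.closedBall x r) :=
    htd.eventually (eventually_gt_nhds hlt1)
  -- the sequence of dyadic radii tends to zero within (0,∞)
  have hseq : Filter.Tendsto (fun k : ℕ => 2*(r₀/2^k)) Filter.atTop (nhdsWithin 0 (Ioi 0)) := by
    apply tendsto_nhdsWithin_of_tendsto_nhds_of_eventually_within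
    · have h1 : Filter.Tendsto (fun k : ℕ => ((1:ℝ)/2)^k) Filter.atTop (nhds 0) :=
        tendsto_pow_atTop_nhds_zero_of_lt_one (by norm_num) (by norm_num)
      have h2 := h1.const_mul (2*r₀)
      rw [mul_zero] at h2
      convert h2 using 2 with k
      rw [div_pow, one_pow]
      ring
    · exact Filter.Eventually.of_forall (fun k => Set.mem_Ioi.2 (by positivity))
  have hevk := (hseq.eventually hev).and (Filter.eventually_gt_atTop p.1)
  obtain ⟨K, hdens, hK⟩ := hevk.exists
  -- the covering cube at level K
  obtain ⟨j, hjval, hjsub, hjx⟩ := cover_level hr₀ hval hK.le hxP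
  -- the density of s in the covering cube is large
  have hgood : ∀ q : ℕ × (Fin n → ℕ), dValid n q → x ∈ dC n c₀ r₀ q → q.1 = K →
      tauC n * volume (dC n c₀ r₀ q) < volume (dC n c₀ r₀ q ∩ s) := by
    intro q hqval hqx hqK
    by_contra hcon
    push_neg at hcon
    set v := volume (dC n c₀ r₀ q) with hv
    have hv0 : v ≠ 0 := (vol_dC_pos hr₀ q).ne'
    have hvtop : v ≠ ⊤ := vol_dC_ne_top q
    set B := volume (Metric.closedBall x (2*(r₀/2^K))) with hB
    have hBv : B = 2^n * v := by
      rw [hB, vol_ball_eq hr₀, hv]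
      congr 1
      have : q = (K, q.2) := by rw [← hqK]
      rw [this, vol_dC_level]
    have hB0 : B ≠ 0 := by
      rw [hBv]
      exact mul_ne_zero (pow_ne_zero _ two_ne_zero') hv0
    have hBtop : B ≠ ⊤ := by
      rw [hBv]
      exact ENNReal.mul_ne_top (by simp) hvtop
    have hsubball : dC n c₀ r₀ q ⊆ Metric.closedBall x (2*(r₀/2^K)) := by
      have := dC_subset_ball hr₀ (p := q) hqx
      rwa [hqK] at this
    -- A := vol (s ∩ ball), D := vol (ball \ s)
    set A := volume (s ∩ Metric.closedBall x (2*(r₀/2^K))) with hA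
    have hAD : volume (Metric.closedBall x (2*(r₀/2^K)) ∩ s)
        + volume (Metric.closedBall x (2*(r₀/2^K)) \ s) = B := partition_vol hsm
    have hAcomm : volume (Metric.closedBall x (2*(r₀/2^K)) ∩ s) = A := by
      rw [hA, Set.inter_comm]
    -- from the density bound : (1 - lamE) * B < A
    have hdens' : (1:ℝ≥0∞) - lamE n < A / B := hdens
    have hmul : ((1:ℝ≥0∞) - lamE n) * B < A :=
      (ENNReal.lt_div_iff_mul_lt (a := A) (b := B) (c := (1:ℝ≥0∞) - lamE n)
        (Or.inl hB0) (Or.inl hBtop)).1 hdens'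
    have hsubm : ((1:ℝ≥0∞) - lamE n) * B = B - lamE n * B := by
      rw [ENNReal.sub_mul (fun _ _ => hBtop), one_mul]
    have hlamB : lamE n * B ≤ B := by
      apply mul_le_of_le_one_left (zero_le)
      rw [lamE]
      exact pow_le_one' (ENNReal.inv_le_one.2 one_le_two) _
    have hBltA : B < A + lamE n * B := by
      rw [hsubm] at hmul
      exact (ENNReal.sub_lt_iff_lt_right (ne_top_of_le_ne_top hBtop hlamB) hlamB).1 hmul
    -- lamE * B = quarter * v
    have hlamBv : lamE n * B = (2⁻¹ * 2⁻¹) * v := by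
      rw [hBv, ← mul_assoc, mul_comm (lamE n) ((2:ℝ≥0∞)^n), pow_mul_lamE']
    -- D ≥ half v
    have hpartq : volume (dC n c₀ r₀ q ∩ s) + volume (dC n c₀ r₀ q \ s) = v :=
      partition_vol hsm
    have hhalf : 2⁻¹ * v ≤ volume (dC n c₀ r₀ q \ s) := by
      have h1 : volume (dC n c₀ r₀ q ∩ s) ≤ 2⁻¹ * v :=
        le_trans hcon (mul_le_mul_left tauC_le_half _)
      have h2 : v ≤ 2⁻¹ * v + volume (dC n c₀ r₀ q \ s) := by
        calc v = volume (dC n c₀ r₀ q ∩ s) + volume (dC n c₀ r₀ q \ s) := hpartq.symm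
          _ ≤ 2⁻¹ * v + volume (dC n c₀ r₀ q \ s) := add_le_add_left h1 _
      have hveq : v = 2⁻¹ * v + 2⁻¹ * v := by
        rw [← two_mul, ← mul_assoc, two_mul_inv_cancel, one_mul]
      have h3 : 2⁻¹*v + 2⁻¹*v ≤ 2⁻¹*v + volume (dC n c₀ r₀ q \ s) :=
        le_trans (le_of_eq hveq.symm) h2
      exact (ENNReal.add_le_add_iff_left (by
        exact ENNReal.mul_ne_top (by simp) hvtop)).1 h3
    have hDge : 2⁻¹ * v ≤ volume (Metric.closedBall x (2*(r₀/2^K)) \ s) :=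
      le_trans hhalf (measure_mono (Set.diff_subset_diff_left hsubball))
    -- combine : B ≥ A + half v but B < A + quarter v
    have hBge : A + 2⁻¹ * v ≤ B := by
      calc A + 2⁻¹ * v ≤ volume (Metric.closedBall x (2*(r₀/2^K)) ∩ s)
            + volume (Metric.closedBall x (2*(r₀/2^K)) \ s) := by
            rw [hAcomm]
            exact add_le_add_right hDge _
        _ = B := hAD
    have hfin : A + 2⁻¹ * v < A + (2⁻¹ * 2⁻¹) * v := by
      calc A + 2⁻¹ * v ≤ B := hBge
        _ < A + lamE n * B := hBltA
        _ = A + (2⁻¹ * 2⁻¹) * v := by rw [hlamBv]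
    have hAne : A ≠ ⊤ := ne_top_of_le_ne_top hBtop (measure_mono Set.inter_subset_right)
    have hfin2 : 2⁻¹ * v < (2⁻¹ * 2⁻¹) * v := (ENNReal.add_lt_add_iff_left hAne).1 hfin
    have : (2⁻¹ * 2⁻¹) * v ≤ 2⁻¹ * v := by
      apply mul_le_mul_left
      exact mul_le_of_le_one_right (zero_le) (ENNReal.inv_le_one.2 one_le_two)
    exact absurd hfin2 (not_lt.2 this)
  -- now select a maximal (minimal level) good cube
  set P : ℕ → Prop := fun k => ∃ j', dValid n (k, j') ∧ dSub n (k, j') p ∧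
    x ∈ dC n c₀ r₀ (k, j') ∧ (k, j') ≠ p ∧
    tauC n * volume (dC n c₀ r₀ (k, j')) < volume (dC n c₀ r₀ (k, j') ∩ s) with hP
  have hPK : P K := by
    refine ⟨j, hjval, hjsub, hjx, ?_, hgood (K, j) hjval hjx rfl⟩
    intro h
    have := congrArg Prod.fst h
    simp at this
    omega
  have hPex : ∃ k, P k := ⟨K, hPK⟩
  set k0 := Nat.find hPex with hk0
  obtain ⟨j0, hj0val, hj0sub, hj0x, hj0ne, hj0dens⟩ := Nat.find_spec hPex
  refine Set.mem_biUnion (show (k0, j0) ∈ stopSet f c₀ r₀ p mp from ?_) hj0x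
  refine ⟨hj0sub, hj0ne, hj0dens, ?_⟩
  intro q' hq'p hq'sup hq'ne
  by_contra hcon
  push_neg at hcon
  have hx' : x ∈ dC n c₀ r₀ q' := dSub_subset hr₀ hq'sup hj0x
  rcases eq_or_ne q' p with hqp | hqp
  · -- q' = p : contradiction with vol Ω small
    rw [hqp] at hcon
    have h1 : volume (dC n c₀ r₀ p ∩ s) ≤ tauC n * volume (dC n c₀ r₀ p) := by
      calc volume (dC n c₀ r₀ p ∩ s) ≤ volume s := measure_mono Set.inter_subset_right
        _ ≤ lamE n * volume (dC n c₀ r₀ p) := vol_Omega_le hf hr₀ hmp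
        _ ≤ tauC n * volume (dC n c₀ r₀ p) := mul_le_mul_left lamE_le_tauC _
    exact absurd hcon (not_lt.2 h1)
  · -- q' ≠ p : smaller level would also be good, contradicting minimality
    have hlev : q'.1 < k0 := dSub_ne_level_lt hq'sup hq'ne.symm
    have hq'P : P q'.1 := by
      refine ⟨q'.2, ?_, ?_, ?_, ?_, ?_⟩
      · have := dSub_valid hq'p hval
        intro i; exact this i
      · have : (q'.1, q'.2) = q' := rfl
        rw [this]; exact hq'p
      · have : (q'.1, q'.2) = q' := rfl
        rw [this]; exact hx'
      · have : (q'.1, q'.2) = q' := rfl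
        rw [this]; exact hqp
      · have : (q'.1, q'.2) = q' := rfl
        rw [this]; exact hcon
    exact absurd hq'P (Nat.find_min hPex hlev)

/-! ### The tree of stopping cubes -/

def nodeMed (f : Rn n → ℝ) (c₀ : Rn n) (r₀ : ℝ) (p : ℕ × (Fin n → ℕ)) (mp : ℝ)
    (q : ℕ × (Fin n → ℕ)) : ℝ :=
  Classical.epsilon
    (fun m' => IsMedian f (dC n c₀ r₀ q) m' ∧ |m' - mp| ≤ 2 * oscQ f c₀ r₀ p)

lemma nodeMed_spec (hf : Measurable f) {c₀ : Rn n} {r₀ : ℝ} (hr₀ : 0 < r₀)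
    {p : ℕ × (Fin n → ℕ)} {mp : ℝ} {q : ℕ × (Fin n → ℕ)} (hq : q ∈ stopSet f c₀ r₀ p mp) :
    IsMedian f (dC n c₀ r₀ q) (nodeMed f c₀ r₀ p mp q) ∧
      |nodeMed f c₀ r₀ p mp q - mp| ≤ 2 * oscQ f c₀ r₀ p := by
  exact Classical.epsilon_spec (child_median hf hr₀ hq)

def childNodes (f : Rn n → ℝ) (c₀ : Rn n) (r₀ : ℝ) (pr : (ℕ × (Fin n → ℕ)) × ℝ) :
    Set ((ℕ × (Fin n → ℕ)) × ℝ) :=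
  (fun q => (q, nodeMed f c₀ r₀ pr.1 pr.2 q)) '' (stopSet f c₀ r₀ pr.1 pr.2)

def rootIdx (n : ℕ) : ℕ × (Fin n → ℕ) := (0, fun _ => 0)

def gen (f : Rn n → ℝ) (c₀ : Rn n) (r₀ : ℝ) (m : ℝ) : ℕ → Set ((ℕ × (Fin n → ℕ)) × ℝ)
  | 0 => {(rootIdx n, m)}
  | (k+1) => ⋃ pr ∈ gen f c₀ r₀ m k, childNodes f c₀ r₀ pr

lemma root_cube (c₀ : Rn n) (r₀ : ℝ) : dC n c₀ r₀ (rootIdx n) = cube n c₀ r₀ := by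
  have h1 : (fun i => c₀ i - r₀ + (2 * (((rootIdx n).2 i : ℕ) : ℝ) + 1) * (r₀ / 2 ^ (rootIdx n).1))
      = c₀ := by
    funext i
    show c₀ i - r₀ + (2 * (((0:ℕ)) : ℝ) + 1) * (r₀ / 2 ^ (0:ℕ)) = c₀ i
    push_cast
    ring
  have h2 : r₀ / 2 ^ (rootIdx n).1 = r₀ := by
    show r₀ / 2 ^ (0:ℕ) = r₀
    norm_num
  rw [dC, h1, h2]

variable {m : ℝ} {c₀ : Rn n} {r₀ : ℝ}

lemma gen_valid_med (hf : Measurable f) (hr₀ : 0 < r₀) (hm : IsMedian f (cube n c₀ r₀) m) :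
    ∀ k, ∀ nd ∈ gen f c₀ r₀ m k, dValid n nd.1 ∧ IsMedian f (dC n c₀ r₀ nd.1) nd.2 := by
  intro k
  induction k with
  | zero =>
    intro nd hnd
    rw [gen, Set.mem_singleton_iff] at hnd
    subst hnd
    constructor
    · intro i; simp [rootIdx]
    · rw [root_cube]; exact hm
  | succ k ih =>
    intro nd hnd
    rw [gen] at hnd
    obtain ⟨pr, hpr, hnd⟩ := Set.mem_iUnion₂.1 hnd
    obtain ⟨q, hq, hqnd⟩ := hnd
    subst hqnd
    obtain ⟨hval, hmed⟩ := ih pr hpr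
    refine ⟨dSub_valid hq.1 hval, ?_⟩
    exact (nodeMed_spec hf hr₀ hq).1

lemma gen_child_bound (hf : Measurable f) (hr₀ : 0 < r₀)
    {pr : (ℕ × (Fin n → ℕ)) × ℝ} {nd : (ℕ × (Fin n → ℕ)) × ℝ}
    (hnd : nd ∈ childNodes f c₀ r₀ pr) :
    nd.1 ∈ stopSet f c₀ r₀ pr.1 pr.2 ∧ |nd.2 - pr.2| ≤ 2 * oscQ f c₀ r₀ pr.1 := by
  obtain ⟨q, hq, hqnd⟩ := hnd
  subst hqnd
  exact ⟨hq, (nodeMed_spec hf hr₀ hq).2⟩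

lemma gen_countable : ∀ k, (gen f c₀ r₀ m k).Countable := by
  intro k
  induction k with
  | zero => exact Set.countable_singleton _
  | succ k ih =>
    rw [gen]
    exact Set.Countable.biUnion ih (fun pr _ => (Set.to_countable _).image _)

lemma gen_pairwise (hf : Measurable f) (hr₀ : 0 < r₀) :
    ∀ k, ∀ nd ∈ gen f c₀ r₀ m k, ∀ nd' ∈ gen f c₀ r₀ m k, nd ≠ nd' →
      volume (dC n c₀ r₀ nd.1 ∩ dC n c₀ r₀ nd'.1) = 0 := by
  intro k
  induction k with
  | zero =>
    intro nd hnd nd' hnd' hne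
    rw [gen, Set.mem_singleton_iff] at hnd hnd'
    exact absurd (hnd.trans hnd'.symm) hne
  | succ k ih =>
    intro nd hnd nd' hnd' hne
    rw [gen] at hnd hnd'
    obtain ⟨pr, hpr, q, hq, hqnd⟩ := Set.mem_iUnion₂.1 hnd
    obtain ⟨pr', hpr', q', hq', hqnd'⟩ := Set.mem_iUnion₂.1 hnd'
    subst hqnd; subst hqnd'
    rcases eq_or_ne pr pr' with hpp | hpp
    · subst hpp
      have hqq : q ≠ q' := by
        intro h
        subst h
        exact hne rfl
      exact stop_pairwise_null hr₀ hq hq' hqq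
    · apply measure_mono_null (t := dC n c₀ r₀ pr.1 ∩ dC n c₀ r₀ pr'.1)
      · exact Set.inter_subset_inter (dSub_subset hr₀ hq.1) (dSub_subset hr₀ hq'.1)
      · exact ih pr hpr pr' hpr' hpp

def GsetK (f : Rn n → ℝ) (c₀ : Rn n) (r₀ : ℝ) (m : ℝ) (k : ℕ) : Set (Rn n) :=
  ⋃ nd ∈ gen f c₀ r₀ m k, dC n c₀ r₀ nd.1

lemma Gset_antitone (hr₀ : 0 < r₀) : ∀ k, GsetK f c₀ r₀ m (k+1) ⊆ GsetK f c₀ r₀ m k := by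
  intro k x hx
  rw [GsetK] at hx ⊢
  obtain ⟨nd, hnd, hxnd⟩ := Set.mem_iUnion₂.1 hx
  rw [gen] at hnd
  obtain ⟨pr, hpr, q, hq, hqnd⟩ := Set.mem_iUnion₂.1 hnd
  subst hqnd
  exact Set.mem_biUnion hpr (dSub_subset hr₀ hq.1 hxnd)

lemma Gset_vol_eq (hf : Measurable f) (hr₀ : 0 < r₀) (k : ℕ) :
    volume (GsetK f c₀ r₀ m k)
      = ∑' nd : ↥(gen f c₀ r₀ m k), volume (dC n c₀ r₀ (nd : (ℕ × (Fin n → ℕ)) × ℝ).1) := by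
  haveI : Countable ↥(gen f c₀ r₀ m k) := (gen_countable k).to_subtype
  rw [GsetK, Set.biUnion_eq_iUnion]
  refine measure_iUnion₀ ?_ ?_
  · intro nd nd' hne
    have hne' : (nd : (ℕ × (Fin n → ℕ)) × ℝ) ≠ (nd' : (ℕ × (Fin n → ℕ)) × ℝ) :=
      fun h => hne (Subtype.ext h)
    exact gen_pairwise hf hr₀ k _ nd.2 _ nd'.2 hne'
  · intro nd
    exact (measurableSet_dC _).nullMeasurableSet

lemma Gset_vol (hf : Measurable f) (hr₀ : 0 < r₀) (hm : IsMedian f (cube n c₀ r₀) m) :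
    ∀ k, volume (GsetK f c₀ r₀ m k)
      ≤ ((2:ℝ≥0∞)⁻¹)^k * volume (dC n c₀ r₀ (rootIdx n)) := by
  intro k
  induction k with
  | zero =>
    rw [pow_zero, one_mul, GsetK]
    apply measure_mono
    apply Set.iUnion₂_subset
    intro nd hnd
    rw [gen, Set.mem_singleton_iff] at hnd
    subst hnd
    exact subset_rfl
  | succ k ih =>
    haveI : Countable ↥(gen f c₀ r₀ m k) := (gen_countable k).to_subtype
    have hsub : GsetK f c₀ r₀ m (k+1) ⊆
        ⋃ pr : ↥(gen f c₀ r₀ m k),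
          (⋃ q ∈ stopSet f c₀ r₀ (pr : (ℕ × (Fin n → ℕ)) × ℝ).1
            (pr : (ℕ × (Fin n → ℕ)) × ℝ).2, dC n c₀ r₀ q) := by
      intro x hx
      rw [GsetK] at hx
      obtain ⟨nd, hnd, hxnd⟩ := Set.mem_iUnion₂.1 hx
      rw [gen] at hnd
      obtain ⟨pr, hpr, hnd2⟩ := Set.mem_iUnion₂.1 hnd
      obtain ⟨q, hq, hqnd⟩ := hnd2
      subst hqnd
      exact Set.mem_iUnion.2 ⟨⟨pr, hpr⟩, Set.mem_biUnion hq hxnd⟩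
    calc volume (GsetK f c₀ r₀ m (k+1))
        ≤ ∑' pr : ↥(gen f c₀ r₀ m k),
            volume (⋃ q ∈ stopSet f c₀ r₀ (pr : (ℕ × (Fin n → ℕ)) × ℝ).1
              (pr : (ℕ × (Fin n → ℕ)) × ℝ).2, dC n c₀ r₀ q) :=
          le_trans (measure_mono hsub) (measure_iUnion_le _)
      _ ≤ ∑' pr : ↥(gen f c₀ r₀ m k),
            (2:ℝ≥0∞)⁻¹ * volume (dC n c₀ r₀ (pr : (ℕ × (Fin n → ℕ)) × ℝ).1) := by
          apply ENNReal.tsum_le_tsum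
          intro pr
          have hmed := (gen_valid_med hf hr₀ hm k _ pr.2).2
          calc volume (⋃ q ∈ stopSet f c₀ r₀ (pr : (ℕ × (Fin n → ℕ)) × ℝ).1
              (pr : (ℕ × (Fin n → ℕ)) × ℝ).2, dC n c₀ r₀ q)
              ≤ volume (dC n c₀ r₀ (pr : (ℕ × (Fin n → ℕ)) × ℝ).1) / 2 := stop_sum hf hr₀ hmed
            _ = (2:ℝ≥0∞)⁻¹ * volume (dC n c₀ r₀ (pr : (ℕ × (Fin n → ℕ)) × ℝ).1) := by
                rw [ENNReal.div_eq_inv_mul]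
      _ = (2:ℝ≥0∞)⁻¹ * volume (GsetK f c₀ r₀ m k) := by
          rw [ENNReal.tsum_mul_left, Gset_vol_eq hf hr₀]
      _ ≤ (2:ℝ≥0∞)⁻¹ * (((2:ℝ≥0∞)⁻¹)^k * volume (dC n c₀ r₀ (rootIdx n))) :=
          mul_le_mul_right ih _
      _ = ((2:ℝ≥0∞)⁻¹)^(k+1) * volume (dC n c₀ r₀ (rootIdx n)) := by
          rw [← mul_assoc, ← pow_succ']

lemma iInter_Gset_null (hf : Measurable f) (hr₀ : 0 < r₀)
    (hm : IsMedian f (cube n c₀ r₀) m) :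
    volume (⋂ k, GsetK f c₀ r₀ m k) = 0 := by
  have hle : ∀ k, volume (⋂ k, GsetK f c₀ r₀ m k)
      ≤ ((2:ℝ≥0∞)⁻¹)^k * volume (dC n c₀ r₀ (rootIdx n)) := fun k =>
    le_trans (measure_mono (Set.iInter_subset _ k)) (Gset_vol hf hr₀ hm k)
  have htend : Filter.Tendsto (fun k : ℕ => ((2:ℝ≥0∞)⁻¹)^k * volume (dC n c₀ r₀ (rootIdx n)))
      Filter.atTop (nhds 0) := by
    have h1 : Filter.Tendsto (fun k : ℕ => ((2:ℝ≥0∞)⁻¹)^k) Filter.atTop (nhds 0) :=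
      ENNReal.tendsto_pow_atTop_nhds_zero_of_lt_one (ENNReal.inv_lt_one.2 one_lt_two)
    have h2 := ENNReal.Tendsto.mul_const h1
      (Or.inr (vol_dC_ne_top (c₀ := c₀) (r₀ := r₀) (rootIdx n)))
    rwa [zero_mul] at h2
  have h3 : volume (⋂ k, GsetK f c₀ r₀ m k) ≤ 0 := ge_of_tendsto' htend hle
  exact le_antisymm h3 (zero_le)

/-- The global null set collecting all degenerate intersections of dyadic cubes. -/
def Nall (c₀ : Rn n) (r₀ : ℝ) : Set (Rn n) :=
  ⋃ pq : (ℕ × (Fin n → ℕ)) × (ℕ × (Fin n → ℕ)),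
    if volume (dC n c₀ r₀ pq.1 ∩ dC n c₀ r₀ pq.2) = 0
    then dC n c₀ r₀ pq.1 ∩ dC n c₀ r₀ pq.2 else (∅ : Set (Rn n))

lemma Nall_null : volume (Nall c₀ r₀) = 0 := by
  refine le_antisymm (le_trans (measure_iUnion_le _) ?_) (zero_le)
  have : ∀ pq : (ℕ × (Fin n → ℕ)) × (ℕ × (Fin n → ℕ)),
      volume (if volume (dC n c₀ r₀ pq.1 ∩ dC n c₀ r₀ pq.2) = 0
        then dC n c₀ r₀ pq.1 ∩ dC n c₀ r₀ pq.2 else (∅ : Set (Rn n))) = 0 := by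
    intro pq
    split_ifs with h
    · exact h
    · exact measure_empty
  simp [this]

lemma Nall_meas : MeasurableSet (Nall c₀ r₀) := by
  apply MeasurableSet.iUnion
  intro pq
  split_ifs with h
  · exact (measurableSet_dC _).inter (measurableSet_dC _)
  · exact MeasurableSet.empty

lemma subset_Nall {p q : ℕ × (Fin n → ℕ)}
    (h : volume (dC n c₀ r₀ p ∩ dC n c₀ r₀ q) = 0) :
    dC n c₀ r₀ p ∩ dC n c₀ r₀ q ⊆ Nall c₀ r₀ := by
  intro x hx
  apply Set.mem_iUnion.2
  refine ⟨(p, q), ?_⟩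
  rw [if_pos h]
  exact hx

/-- Parent uniqueness off the null set. -/
lemma gen_unique (hf : Measurable f) (hr₀ : 0 < r₀) {k : ℕ}
    {nd nd' : (ℕ × (Fin n → ℕ)) × ℝ} (hnd : nd ∈ gen f c₀ r₀ m k)
    (hnd' : nd' ∈ gen f c₀ r₀ m k) {x : Rn n} (hx : x ∈ dC n c₀ r₀ nd.1)
    (hx' : x ∈ dC n c₀ r₀ nd'.1) (hN : x ∉ Nall c₀ r₀) : nd = nd' := by
  by_contra hne
  exact hN (subset_Nall (gen_pairwise hf hr₀ k nd hnd nd' hnd' hne) ⟨hx, hx'⟩)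

/-! ### The sparse family -/

def Sfam (f : Rn n → ℝ) (c₀ : Rn n) (r₀ : ℝ) (m : ℝ) : Set (Set (Rn n)) :=
  {C | ∃ k, ∃ nd ∈ gen f c₀ r₀ m k, C = dC n c₀ r₀ nd.1}

lemma Sfam_sub (hf : Measurable f) (hr₀ : 0 < r₀) (hm : IsMedian f (cube n c₀ r₀) m) :
    Sfam f c₀ r₀ m ⊆ dyadicSub n c₀ r₀ := by
  rintro C ⟨k, nd, hnd, rfl⟩
  exact mem_dyadicSub (gen_valid_med hf hr₀ hm k nd hnd).1

lemma Sfam_countable : (Sfam f c₀ r₀ m).Countable := by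
  have : Sfam f c₀ r₀ m ⊆ ⋃ k : ℕ, (fun nd : (ℕ × (Fin n → ℕ)) × ℝ => dC n c₀ r₀ nd.1) ''
      (gen f c₀ r₀ m k) := by
    rintro C ⟨k, nd, hnd, rfl⟩
    exact Set.mem_iUnion.2 ⟨k, Set.mem_image_of_mem _ hnd⟩
  exact Set.Countable.mono this (Set.countable_iUnion (fun k => (gen_countable k).image _))

lemma Sfam_meas {C : Set (Rn n)} (hC : C ∈ Sfam f c₀ r₀ m) : MeasurableSet C := by
  obtain ⟨k, nd, hnd, rfl⟩ := hC
  exact measurableSet_dC _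

lemma gen_ancestor (hr₀ : 0 < r₀) : ∀ k', ∀ nd' ∈ gen f c₀ r₀ m k', ∀ k ≤ k',
    ∃ a ∈ gen f c₀ r₀ m k, dC n c₀ r₀ (nd' : (ℕ × (Fin n → ℕ)) × ℝ).1 ⊆ dC n c₀ r₀ a.1 ∧
      (k = k' → a = nd') := by
  intro k'
  induction k' with
  | zero =>
    intro nd' hnd' k hk
    interval_cases k
    exact ⟨nd', hnd', subset_rfl, fun _ => rfl⟩
  | succ k' ih =>
    intro nd' hnd' k hk
    rcases eq_or_lt_of_le hk with heq | hlt
    · exact ⟨nd', by rw [heq]; exact hnd', subset_rfl, fun _ => rfl⟩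
    · have hk' : k ≤ k' := by omega
      rw [gen] at hnd'
      obtain ⟨pr, hpr, hch⟩ := Set.mem_iUnion₂.1 hnd'
      obtain ⟨q, hq, hqnd⟩ := hch
      obtain ⟨a, ha, hsub, _⟩ := ih pr hpr k hk'
      refine ⟨a, ha, ?_, fun h => absurd h (by omega)⟩
      have h1 : dC n c₀ r₀ (nd' : (ℕ × (Fin n → ℕ)) × ℝ).1 ⊆ dC n c₀ r₀ pr.1 := by
        rw [← hqnd]
        exact dSub_subset hr₀ hq.1
      exact h1.trans hsub

lemma Sfam_trichotomy (hf : Measurable f) (hr₀ : 0 < r₀) {C C' : Set (Rn n)}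
    (hC : C ∈ Sfam f c₀ r₀ m) (hC' : C' ∈ Sfam f c₀ r₀ m) :
    C ⊆ C' ∨ C' ⊆ C ∨ C ∩ C' ⊆ Nall c₀ r₀ := by
  obtain ⟨k, nd, hnd, rfl⟩ := hC
  obtain ⟨k', nd', hnd', rfl⟩ := hC'
  rcases le_total k k' with hkk | hkk
  · obtain ⟨a, ha, hsub, _⟩ := gen_ancestor hr₀ k' nd' hnd' k hkk
    rcases eq_or_ne a nd with hann | hann
    · right; left; rw [← hann]; exact hsub
    · right; right
      refine Set.Subset.trans (Set.inter_subset_inter_right _ hsub) ?_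
      exact subset_Nall (gen_pairwise hf hr₀ k nd hnd a ha (Ne.symm hann))
  · obtain ⟨a, ha, hsub, _⟩ := gen_ancestor hr₀ k nd hnd k' hkk
    rcases eq_or_ne a nd' with hann | hann
    · left; rw [← hann]; exact hsub
    · right; right
      refine Set.Subset.trans (Set.inter_subset_inter_left _ hsub) ?_
      intro x hx
      exact subset_Nall (gen_pairwise hf hr₀ k' a ha nd' hnd' hann) ⟨hx.1, hx.2⟩

/-- Strict descendants in `S` of a cube of `S` are covered by its stopping children. -/
lemma Sfam_desc (hf : Measurable f) (hr₀ : 0 < r₀) {k : ℕ}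
    {nd : (ℕ × (Fin n → ℕ)) × ℝ} (hnd : nd ∈ gen f c₀ r₀ m k) {C' : Set (Rn n)}
    (hC' : C' ∈ Sfam f c₀ r₀ m) (hsub : C' ⊆ dC n c₀ r₀ nd.1) (hne : C' ≠ dC n c₀ r₀ nd.1) :
    C' ⊆ ⋃ q ∈ stopSet f c₀ r₀ nd.1 nd.2, dC n c₀ r₀ q := by
  obtain ⟨k', nd', hnd', rfl⟩ := hC'
  have hkk : k < k' := by
    by_contra hcon
    push_neg at hcon
    obtain ⟨a, ha, hsuba, _⟩ := gen_ancestor hr₀ k nd hnd k' hcon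
    rcases eq_or_ne nd' a with hann | hann
    · -- then dC nd.1 ⊆ dC nd'.1 and nd' cube ⊆ nd cube, so equal
      exact hne (Set.Subset.antisymm hsub (by rw [hann]; exact hsuba))
    · have h0 : volume (dC n c₀ r₀ nd'.1 ∩ dC n c₀ r₀ a.1) = 0 :=
        gen_pairwise hf hr₀ k' nd' hnd' a ha hann
      have hposs : 0 < volume (dC n c₀ r₀ nd'.1) := vol_dC_pos hr₀ _
      have : dC n c₀ r₀ nd'.1 ⊆ dC n c₀ r₀ nd'.1 ∩ dC n c₀ r₀ a.1 := by
        intro x hx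
        exact ⟨hx, hsuba (hsub hx)⟩
      have := measure_mono_null this h0
      rw [this] at hposs
      exact absurd hposs (lt_irrefl _)
  -- ancestor of nd' at generation k+1
  obtain ⟨b, hb, hsubb, _⟩ := gen_ancestor hr₀ k' nd' hnd' (k+1) (by omega)
  rw [gen] at hb
  obtain ⟨pr, hpr, hch⟩ := Set.mem_iUnion₂.1 hb
  obtain ⟨q, hq, hqb⟩ := hch
  have hbsub : dC n c₀ r₀ b.1 ⊆ dC n c₀ r₀ pr.1 := by
    rw [← hqb]
    exact dSub_subset hr₀ hq.1
  -- pr = nd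
  have hprnd : pr = nd := by
    by_contra hne2
    have h0 : volume (dC n c₀ r₀ pr.1 ∩ dC n c₀ r₀ nd.1) = 0 :=
      gen_pairwise hf hr₀ k pr hpr nd hnd hne2
    have hposs : 0 < volume (dC n c₀ r₀ nd'.1) := vol_dC_pos hr₀ _
    have hss : dC n c₀ r₀ nd'.1 ⊆ dC n c₀ r₀ pr.1 ∩ dC n c₀ r₀ nd.1 :=
      fun x hx => ⟨hbsub (hsubb hx), hsub hx⟩
    have := measure_mono_null hss h0
    rw [this] at hposs
    exact absurd hposs (lt_irrefl _)
  intro x hx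
  apply Set.mem_biUnion (show q ∈ stopSet f c₀ r₀ nd.1 nd.2 from hprnd ▸ hq)
  rw [← hqb] at hsubb
  exact hsubb hx

/-- `Sfam` is sparse. -/
lemma Sfam_sparse (hf : Measurable f) (hr₀ : 0 < r₀) (hm : IsMedian f (cube n c₀ r₀) m) :
    IsSparse n (Sfam f c₀ r₀ m) := by
  classical
  refine ⟨fun C => C \ (Nall c₀ r₀ ∪ ⋃₀ {C' ∈ Sfam f c₀ r₀ m | C' ⊆ C ∧ C' ≠ C}), ?_, ?_⟩
  · intro C hC
    obtain ⟨k, nd, hnd, rfl⟩ := hC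
    set C := dC n c₀ r₀ nd.1 with hCdef
    have hmeasU : MeasurableSet (⋃₀ {C' ∈ Sfam f c₀ r₀ m | C' ⊆ C ∧ C' ≠ C}) := by
      apply MeasurableSet.sUnion
      · exact Set.Countable.mono (fun C' hC' => hC'.1) Sfam_countable
      · intro C' hC'
        exact Sfam_meas hC'.1
    refine ⟨Set.diff_subset, (measurableSet_dC _).diff (Nall_meas.union hmeasU), ?_⟩
    -- volume bound
    have hUsub : (⋃₀ {C' ∈ Sfam f c₀ r₀ m | C' ⊆ C ∧ C' ≠ C}) ⊆
        ⋃ q ∈ stopSet f c₀ r₀ nd.1 nd.2, dC n c₀ r₀ q := by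
      intro x hx
      obtain ⟨C', hC', hxC⟩ := hx
      exact Sfam_desc hf hr₀ hnd hC'.1 hC'.2.1 hC'.2.2 hxC
    have hcover : C ⊆ (C \ (Nall c₀ r₀ ∪ ⋃₀ {C' ∈ Sfam f c₀ r₀ m | C' ⊆ C ∧ C' ≠ C}))
        ∪ Nall c₀ r₀ ∪ (⋃ q ∈ stopSet f c₀ r₀ nd.1 nd.2, dC n c₀ r₀ q) := by
      intro x hx
      by_cases h1 : x ∈ Nall c₀ r₀ ∪ ⋃₀ {C' ∈ Sfam f c₀ r₀ m | C' ⊆ C ∧ C' ≠ C}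
      · rcases h1 with h1 | h1
        · exact Or.inl (Or.inr h1)
        · exact Or.inr (hUsub h1)
      · exact Or.inl (Or.inl ⟨hx, h1⟩)
    have hvol : volume C ≤ volume (C \ (Nall c₀ r₀ ∪
        ⋃₀ {C' ∈ Sfam f c₀ r₀ m | C' ⊆ C ∧ C' ≠ C})) + volume C / 2 := by
      calc volume C ≤ volume ((C \ (Nall c₀ r₀ ∪
            ⋃₀ {C' ∈ Sfam f c₀ r₀ m | C' ⊆ C ∧ C' ≠ C})) ∪ Nall c₀ r₀
            ∪ (⋃ q ∈ stopSet f c₀ r₀ nd.1 nd.2, dC n c₀ r₀ q)) := measure_mono hcover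
        _ ≤ volume ((C \ (Nall c₀ r₀ ∪ ⋃₀ {C' ∈ Sfam f c₀ r₀ m | C' ⊆ C ∧ C' ≠ C}))
            ∪ Nall c₀ r₀) + volume (⋃ q ∈ stopSet f c₀ r₀ nd.1 nd.2, dC n c₀ r₀ q) :=
            measure_union_le _ _
        _ ≤ (volume (C \ (Nall c₀ r₀ ∪ ⋃₀ {C' ∈ Sfam f c₀ r₀ m | C' ⊆ C ∧ C' ≠ C}))
            + volume (Nall c₀ r₀)) + volume C / 2 := by
            refine add_le_add (measure_union_le _ _) ?_
            exact stop_sum hf hr₀ (gen_valid_med hf hr₀ hm k nd hnd).2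
        _ = volume (C \ (Nall c₀ r₀ ∪ ⋃₀ {C' ∈ Sfam f c₀ r₀ m | C' ⊆ C ∧ C' ≠ C}))
            + volume C / 2 := by rw [Nall_null, add_zero]
    -- conclude : volume C ≤ 2 * volume E
    have hfin : volume C / 2 ≠ ⊤ :=
      ne_top_of_le_ne_top (vol_dC_ne_top _) (ENNReal.half_le_self)
    have h2 : volume C / 2 ≤ volume (C \ (Nall c₀ r₀ ∪
        ⋃₀ {C' ∈ Sfam f c₀ r₀ m | C' ⊆ C ∧ C' ≠ C})) := by
      have heq : volume C = volume C / 2 + volume C / 2 := (ENNReal.add_halves _).symm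
      have h3 : volume C / 2 + volume C / 2 ≤ volume (C \ (Nall c₀ r₀ ∪
          ⋃₀ {C' ∈ Sfam f c₀ r₀ m | C' ⊆ C ∧ C' ≠ C})) + volume C / 2 :=
        le_trans (le_of_eq heq.symm) hvol
      exact (ENNReal.add_le_add_iff_right hfin).1 h3
    calc volume C = 2 * (volume C / 2) := by
          rw [ENNReal.mul_div_cancel' (fun h => absurd h two_ne_zero') (fun h => absurd h two_ne_top')]
      _ ≤ 2 * volume (C \ (Nall c₀ r₀ ∪
            ⋃₀ {C' ∈ Sfam f c₀ r₀ m | C' ⊆ C ∧ C' ≠ C})) := mul_le_mul_right h2 _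
  · -- pairwise disjointness
    intro C hC C' hC' hne
    have htri := Sfam_trichotomy hf hr₀ hC hC'
    rw [Function.onFun]
    rw [Set.disjoint_left]
    intro x hx hx'
    rcases htri with h | h | h
    · -- C ⊆ C' : then C removed in E C'
      have : x ∈ ⋃₀ {D ∈ Sfam f c₀ r₀ m | D ⊆ C' ∧ D ≠ C'} :=
        ⟨C, ⟨hC, h, hne⟩, hx.1⟩
      exact hx'.2 (Or.inr this)
    · have : x ∈ ⋃₀ {D ∈ Sfam f c₀ r₀ m | D ⊆ C ∧ D ≠ C} :=
        ⟨C', ⟨hC', h, Ne.symm hne⟩, hx'.1⟩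
      exact hx.2 (Or.inr this)
    · exact hx.2 (Or.inl (h ⟨hx.1, hx'.1⟩))

lemma vol_dC_strict (hn : 0 < n) (hr₀ : 0 < r₀) {q p : ℕ × (Fin n → ℕ)} (hlt : p.1 < q.1) :
    volume (dC n c₀ r₀ q) < volume (dC n c₀ r₀ p) := by
  rw [vol_dC, vol_dC]
  apply ENNReal.pow_lt_pow_left hn.ne'
  rw [ENNReal.ofReal_lt_ofReal_iff (by positivity)]
  have h2 : (2:ℝ)^p.1 < (2:ℝ)^q.1 := pow_lt_pow_right₀ (by norm_num : (1:ℝ) < 2) hlt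
  have h3 : r₀/2^q.1 < r₀/2^p.1 := div_lt_div_of_pos_left hr₀ (by positivity) h2
  linarith

theorem mainEst (hn : 0 < n) (hf : Measurable f) (hr₀ : 0 < r₀)
    (hm : IsMedian f (cube n c₀ r₀) m) :
    ∀ᵐ x : Rn n, x ∈ cube n c₀ r₀ →
      ENNReal.ofReal |f x - m| ≤
        2 * ∑' Q : (Sfam f c₀ r₀ m), Set.indicator (Q : Set (Rn n))
          (fun _ => ENNReal.ofReal (osc ((1:ℝ)/2^(n+2)) f (Q : Set (Rn n)))) x := by
  classical
  have hcover : ∀ᵐ x : Rn n, ∀ k : ℕ, ∀ nd ∈ gen f c₀ r₀ m k,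
      x ∈ OmegaSet f c₀ r₀ nd.1 nd.2 → x ∈ ⋃ q ∈ stopSet f c₀ r₀ nd.1 nd.2, dC n c₀ r₀ q := by
    rw [ae_all_iff]
    intro k
    rw [ae_ball_iff (gen_countable k)]
    intro nd hnd
    exact stop_cover hf hr₀ (gen_valid_med hf hr₀ hm k nd hnd).1
      (gen_valid_med hf hr₀ hm k nd hnd).2
  have hNall : ∀ᵐ x : Rn n, x ∉ Nall c₀ r₀ := measure_eq_zero_iff_ae_notMem.mp Nall_null
  have hGset : ∀ᵐ x : Rn n, x ∉ ⋂ k, GsetK f c₀ r₀ m k :=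
    measure_eq_zero_iff_ae_notMem.mp (iInter_Gset_null hf hr₀ hm)
  filter_upwards [hcover, hNall, hGset] with x h2 h1 h3 hx
  have hroot : (rootIdx n, m) ∈ gen f c₀ r₀ m 0 := by rw [gen]; exact rfl
  have hxroot : x ∈ dC n c₀ r₀ (rootIdx n) := by rw [root_cube]; exact hx
  have hEx : ∃ k, x ∉ GsetK f c₀ r₀ m k := by
    by_contra hcon
    push_neg at hcon
    exact h3 (Set.mem_iInter.2 hcon)
  set K := Nat.find hEx with hKdef
  have hKspec : x ∉ GsetK f c₀ r₀ m K := Nat.find_spec hEx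
  have claim : ∀ j : ℕ, ∀ k : ℕ, k + j = K → ∀ nd ∈ gen f c₀ r₀ m k, x ∈ dC n c₀ r₀ nd.1 →
      ∃ F : Finset ↥(Sfam f c₀ r₀ m), (∀ Q ∈ F, x ∈ (Q : Set (Rn n))) ∧
        (∀ Q ∈ F, volume (Q : Set (Rn n)) ≤ volume (dC n c₀ r₀ nd.1)) ∧
        ENNReal.ofReal |f x - nd.2| ≤
          ∑ Q ∈ F, 2 * ENNReal.ofReal (osc ((1:ℝ)/2^(n+2)) f (Q : Set (Rn n))) := by
    intro j
    induction j with
    | zero =>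
      intro k hk nd hnd hxnd
      exfalso
      apply hKspec
      have hkK : k = K := by omega
      rw [← hkK, GsetK]
      exact Set.mem_biUnion hnd hxnd
    | succ j ih =>
      intro k hk nd hnd hxnd
      have hmemS : dC n c₀ r₀ nd.1 ∈ Sfam f c₀ r₀ m := ⟨k, nd, hnd, rfl⟩
      by_cases hnx : x ∈ GsetK f c₀ r₀ m (k+1)
      · -- x lies in a child of nd
        rw [GsetK] at hnx
        obtain ⟨nd', hnd', hxnd'⟩ := Set.mem_iUnion₂.1 hnx
        have hgen := hnd'
        rw [gen] at hgen
        obtain ⟨pr, hpr, hch⟩ := Set.mem_iUnion₂.1 hgen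
        obtain ⟨q, hq, hqnd⟩ := hch
        have hxpr : x ∈ dC n c₀ r₀ pr.1 := by
          have hss : dC n c₀ r₀ nd'.1 ⊆ dC n c₀ r₀ pr.1 := by
            rw [← hqnd]
            exact dSub_subset hr₀ hq.1
          exact hss hxnd'
        have hprnd : pr = nd := gen_unique hf hr₀ hpr hnd hxpr hxnd h1
        rw [hprnd] at hq hqnd
        have hq' : nd'.1 ∈ stopSet f c₀ r₀ nd.1 nd.2 := by rw [← hqnd]; exact hq
        have hmed2 : |nd'.2 - nd.2| ≤ 2 * oscQ f c₀ r₀ nd.1 := by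
          rw [← hqnd]
          exact (nodeMed_spec hf hr₀ hq).2
        obtain ⟨F, hF1, hF2, hF3⟩ := ih (k+1) (by omega) nd' hnd' hxnd'
        have hvlt : volume (dC n c₀ r₀ nd'.1) < volume (dC n c₀ r₀ nd.1) :=
          vol_dC_strict hn hr₀ (dSub_ne_level_lt hq'.1 hq'.2.1)
        have hnotmem : (⟨dC n c₀ r₀ nd.1, hmemS⟩ : ↥(Sfam f c₀ r₀ m)) ∉ F := by
          intro hmem
          have hle := hF2 _ hmem
          simp only at hle
          exact absurd (lt_of_le_of_lt hle hvlt) (lt_irrefl _)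
        refine ⟨insert ⟨dC n c₀ r₀ nd.1, hmemS⟩ F, ?_, ?_, ?_⟩
        · intro Q hQ
          rcases Finset.mem_insert.1 hQ with h | h
          · rw [h]; exact hxnd
          · exact hF1 Q h
        · intro Q hQ
          rcases Finset.mem_insert.1 hQ with h | h
          · rw [h]
          · exact le_trans (hF2 Q h) hvlt.le
        · calc ENNReal.ofReal |f x - nd.2|
              ≤ ENNReal.ofReal (|f x - nd'.2| + 2 * oscQ f c₀ r₀ nd.1) := by
                apply ENNReal.ofReal_le_ofReal
                calc |f x - nd.2| ≤ |f x - nd'.2| + |nd'.2 - nd.2| := abs_sub_le _ _ _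
                  _ ≤ |f x - nd'.2| + 2 * oscQ f c₀ r₀ nd.1 := by linarith [hmed2]
            _ ≤ ENNReal.ofReal |f x - nd'.2| + ENNReal.ofReal (2 * oscQ f c₀ r₀ nd.1) :=
                ENNReal.ofReal_add_le
            _ ≤ (∑ Q ∈ F, 2 * ENNReal.ofReal (osc ((1:ℝ)/2^(n+2)) f (Q : Set (Rn n))))
                + 2 * ENNReal.ofReal (oscQ f c₀ r₀ nd.1) := by
                refine add_le_add hF3 ?_
                rw [ENNReal.ofReal_mul (by norm_num : (0:ℝ) ≤ 2), ENNReal.ofReal_ofNat]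
            _ = ∑ Q ∈ insert (⟨dC n c₀ r₀ nd.1, hmemS⟩ : ↥(Sfam f c₀ r₀ m)) F,
                  2 * ENNReal.ofReal (osc ((1:ℝ)/2^(n+2)) f (Q : Set (Rn n))) := by
                rw [Finset.sum_insert hnotmem, add_comm]
                rfl
      · -- x escapes at the next generation
        have hnotOm : ¬ (2 * oscQ f c₀ r₀ nd.1 < |f x - nd.2|) := by
          intro hlt
          have hOm : x ∈ OmegaSet f c₀ r₀ nd.1 nd.2 := ⟨hxnd, hlt⟩
          obtain ⟨q, hq, hxq⟩ := Set.mem_iUnion₂.1 (h2 k nd hnd hOm)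
          apply hnx
          have hmemgen : (q, nodeMed f c₀ r₀ nd.1 nd.2 q) ∈ gen f c₀ r₀ m (k+1) := by
            rw [gen]
            exact Set.mem_biUnion hnd ⟨q, hq, rfl⟩
          rw [GsetK]
          exact Set.mem_biUnion hmemgen hxq
        push_neg at hnotOm
        refine ⟨{⟨dC n c₀ r₀ nd.1, hmemS⟩}, ?_, ?_, ?_⟩
        · intro Q hQ
          rw [Finset.mem_singleton.1 hQ]
          exact hxnd
        · intro Q hQ
          rw [Finset.mem_singleton.1 hQ]
        · rw [Finset.sum_singleton]
          calc ENNReal.ofReal |f x - nd.2| ≤ ENNReal.ofReal (2 * oscQ f c₀ r₀ nd.1) :=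
                ENNReal.ofReal_le_ofReal hnotOm
            _ = 2 * ENNReal.ofReal (oscQ f c₀ r₀ nd.1) := by
                rw [ENNReal.ofReal_mul (by norm_num : (0:ℝ) ≤ 2), ENNReal.ofReal_ofNat]
            _ = 2 * ENNReal.ofReal (osc ((1:ℝ)/2^(n+2)) f
                  ((⟨dC n c₀ r₀ nd.1, hmemS⟩ : ↥(Sfam f c₀ r₀ m)) : Set (Rn n))) := rfl
  obtain ⟨F, hF1, -, hF3⟩ := claim K 0 (by omega) _ hroot hxroot
  calc ENNReal.ofReal |f x - m|
      ≤ ∑ Q ∈ F, 2 * ENNReal.ofReal (osc ((1:ℝ)/2^(n+2)) f (Q : Set (Rn n))) := hF3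
    _ = 2 * ∑ Q ∈ F, ENNReal.ofReal (osc ((1:ℝ)/2^(n+2)) f (Q : Set (Rn n))) :=
        (Finset.mul_sum F _ 2).symm
    _ = 2 * ∑ Q ∈ F, Set.indicator (Q : Set (Rn n))
          (fun _ => ENNReal.ofReal (osc ((1:ℝ)/2^(n+2)) f (Q : Set (Rn n)))) x := by
        congr 1
        refine Finset.sum_congr rfl (fun Q hQ => ?_)
        rw [Set.indicator_of_mem (hF1 Q hQ)]
    _ ≤ 2 * ∑' Q : (Sfam f c₀ r₀ m), Set.indicator (Q : Set (Rn n))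
          (fun _ => ENNReal.ofReal (osc ((1:ℝ)/2^(n+2)) f (Q : Set (Rn n)))) x :=
        mul_le_mul_right (ENNReal.sum_le_tsum F) _

end Stmt14

/-- local mean oscillation decomposition: for measurable `f` and a cube
`Q₀` there is a sparse family `S` of dyadic subcubes of `Q₀` such that a.e. on `Q₀`,
`|f - m_f(Q₀)| ≤ 2 Σ_{Q∈S} ω_{2^{-(n+2)}}(f;Q) χ_Q`. -/
theorem stmt14 (n : ℕ) (f : Rn n → ℝ) (hf : Measurable f) (c₀ : Rn n) (r₀ : ℝ)
    (hr₀ : 0 < r₀) (m : ℝ) (hm : IsMedian f (cube n c₀ r₀) m) :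
    ∃ S : Set (Set (Rn n)), S ⊆ dyadicSub n c₀ r₀ ∧ IsSparse n S ∧
      ∀ᵐ x : Rn n, x ∈ cube n c₀ r₀ →
        ENNReal.ofReal |f x - m| ≤
          2 * ∑' Q : S, Set.indicator (Q : Set (Rn n))
            (fun _ => ENNReal.ofReal (osc ((1 : ℝ) / 2 ^ (n + 2)) f (Q : Set (Rn n)))) x := by

  rcases Nat.eq_zero_or_pos n with hn | hn
  · subst hn
    haveI : Subsingleton (Rn 0) :=
      ⟨fun a b => funext (fun i => absurd i.isLt (Nat.not_lt_zero _))⟩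
    refine ⟨∅, Set.empty_subset _, ⟨fun _ => ∅, ?_, Set.pairwiseDisjoint_empty⟩, ?_⟩
    · intro Q hQ
      exact absurd hQ (Set.notMem_empty Q)
    · apply Filter.Eventually.of_forall
      intro x hx
      have hfx : f x = m := by
        have hvol : volume (cube 0 c₀ r₀) = 1 := by
          rw [Stmt14.volume_cube, pow_zero]
        by_contra hne
        rcases lt_or_gt_of_ne hne with hlt | hlt
        · -- f x < m
          have hset : {y ∈ cube 0 c₀ r₀ | f y < m} = cube 0 c₀ r₀ := by
            ext y
            simp only [mem_setOf_eq, and_iff_left_iff_imp]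
            intro hy
            rw [Subsingleton.elim y x]
            exact hlt
          have := hm.2
          rw [hset, hvol] at this
          exact absurd this (not_le.2 (ENNReal.half_lt_self one_ne_zero one_ne_top))
        · have hset : {y ∈ cube 0 c₀ r₀ | m < f y} = cube 0 c₀ r₀ := by
            ext y
            simp only [mem_setOf_eq, and_iff_left_iff_imp]
            intro hy
            rw [Subsingleton.elim y x]
            exact hlt
          have := hm.1
          rw [hset, hvol] at this
          exact absurd this (not_le.2 (ENNReal.half_lt_self one_ne_zero one_ne_top))
      rw [hfx]
      simp
  · exact ⟨Stmt14.Sfam f c₀ r₀ m, Stmt14.Sfam_sub hf hr₀ hm,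
      Stmt14.Sfam_sparse hf hr₀ hm, Stmt14.mainEst hn hf hr₀ hm⟩
end
end
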